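/- arXiv:1406.4008 — 7 statements merged into one kernel-verified Lean document; each statement's English description precedes it below -/
import Mathlib

section
/- Let C ⊆ X be a nonempty closed convex set in a Hilbert space X, x ∈ X, λ ∈ [0,2], and define R(x) = x + λ(P_C(x) - x), where P_C is the metric projection onto C. Then for every c ∈ C, ‖R(x) - c‖² ≤ ‖x - c‖² - λ(2-λ)·d(x,C)². -/
open RealInnerProductSpace

/-- Fejér attraction property of the relaxation operator. -/
theorem fejer_attraction
    {X : Type*} [NormedAddCommGroup X] [InnerProductSpace ℝ X] [CompleteSpace X]
    (C : Set X) (hC : C.Nonempty) (hclosed : IsClosed C) (hconv : Convex ℝ C)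
    (x p : X) (hpC : p ∈ C) (hproj : ∀ y ∈ C, ‖x - p‖ ≤ ‖x - y‖)
    (lam : ℝ) (hlam : lam ∈ Set.Icc (0:ℝ) 2) :
    ∀ c ∈ C,
      ‖(x + lam • (p - x)) - c‖ ^ 2 ≤
        ‖x - c‖ ^ 2 - lam * (2 - lam) * (Metric.infDist x C) ^ 2 := by
  intro c hcC
  have hdist : Metric.infDist x C = ‖x - p‖ := by
    apply le_antisymm
    · have := Metric.infDist_le_dist_of_mem (x := x) hpC
      rwa [dist_eq_norm] at this
    · by_contra h
      obtain ⟨y, hy, hlt⟩ := (Metric.infDist_lt_iff hC).mp (not_le.mp h)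
      rw [dist_eq_norm] at hlt
      exact absurd (hproj y hy) (not_le.mpr hlt)
  have hiInf : ‖x - p‖ = ⨅ w : C, ‖x - w‖ := by
    haveI : Nonempty C := hC.to_subtype
    apply le_antisymm
    · apply le_ciInf; intro w; exact hproj w w.2
    · exact ciInf_le ⟨0, fun _ ⟨_, h⟩ => h ▸ norm_nonneg _⟩ (⟨p, hpC⟩ : C)
  have hvar : ⟪x - p, c - p⟫ ≤ 0 :=
    (norm_eq_iInf_iff_real_inner_le_zero hconv hpC).mp hiInf c hcC
  have key : ‖x - p‖ ^ 2 ≤ ⟪x - c, x - p⟫ := by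
    have hxc : x - c = (x - p) - (c - p) := by abel
    have : ⟪x - c, x - p⟫ = ‖x - p‖ ^ 2 - ⟪x - p, c - p⟫ := by
      rw [hxc, inner_sub_left, real_inner_self_eq_norm_sq, real_inner_comm (c - p)]
    linarith
  have expand : ‖(x + lam • (p - x)) - c‖ ^ 2 =
      ‖x - c‖ ^ 2 - 2 * lam * ⟪x - c, x - p⟫ + lam ^ 2 * ‖x - p‖ ^ 2 := by
    have h1 : (x + lam • (p - x)) - c = (x - c) - lam • (x - p) := by
      rw [smul_sub, smul_sub]; abel
    rw [h1, norm_sub_sq_real, real_inner_smul_right, norm_smul, mul_pow,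
      Real.norm_eq_abs, sq_abs]
    ring
  rw [expand, hdist]
  obtain ⟨hl0, hl2⟩ := hlam
  nlinarith [sq_nonneg ‖x - p‖, mul_nonneg hl0 (sub_nonneg.mpr hl2),
    mul_le_mul_of_nonneg_left key (mul_nonneg hl0 (sub_nonneg.mpr hl2))]
end

section
/- Let C ⊆ ℝⁿ be a closed convex set and x̄ ∈ C. Then for every ε > 0 there exists δ > 0 such that for every point x ∈ (B(x̄,δ) ∩ C) \ {x̄} and every unit vector v ∈ N_C(x), one has 0 ≤ -⟨v, x̄ - x⟩ ≤ ε‖x̄ - x‖. -/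
open RealInnerProductSpace

/-- The normal cone of a convex set `C` at `x`. -/
def normalCone {n : ℕ} (C : Set (EuclideanSpace ℝ (Fin n))) (x : EuclideanSpace ℝ (Fin n)) :
    Set (EuclideanSpace ℝ (Fin n)) :=
  {v | ∀ y ∈ C, ⟪v, y - x⟫ ≤ 0}

/-- Supporting hyperplanes near a point: first order estimate. -/
theorem supporting_hyperplane_near_point
    {n : ℕ} (C : Set (EuclideanSpace ℝ (Fin n)))
    (hclosed : IsClosed C) (hconv : Convex ℝ C)
    (xbar : EuclideanSpace ℝ (Fin n)) (hxbar : xbar ∈ C) :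
    ∀ ε > (0:ℝ), ∃ δ > (0:ℝ),
      ∀ x ∈ (Metric.closedBall xbar δ ∩ C) \ {xbar},
        ∀ v ∈ normalCone C x, ‖v‖ = 1 →
          0 ≤ -⟪v, xbar - x⟫ ∧ -⟪v, xbar - x⟫ ≤ ε * ‖xbar - x‖ := by
  intro ε hε
  by_contra h
  push_neg at h
  -- extract sequences
  have hseq : ∀ k : ℕ, ∃ x : EuclideanSpace ℝ (Fin n),
      (x ∈ Metric.closedBall xbar (1/(k+1)) ∧ x ∈ C ∧ x ≠ xbar) ∧
      ∃ v ∈ normalCone C x, ‖v‖ = 1 ∧ ε * ‖xbar - x‖ < -⟪v, xbar - x⟫ := by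
    intro k
    obtain ⟨x, hx, v, hv, hv1, hlt⟩ := h (1/(k+1)) (by positivity)
    obtain ⟨⟨hxb, hxC⟩, hxne⟩ := hx
    refine ⟨x, ⟨hxb, hxC, hxne⟩, v, hv, hv1, ?_⟩
    apply hlt
    have := hv xbar hxbar
    linarith
  choose x hx v hvN hv1 hlt using hseq
  have hxb : ∀ k : ℕ, x k ∈ Metric.closedBall xbar (1/(k+1)) := fun k => (hx k).1
  have hxC : ∀ k, x k ∈ C := fun k => (hx k).2.1
  have hxne : ∀ k, x k ≠ xbar := fun k => (hx k).2.2
  -- x k → xbar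
  have hxlim : Filter.Tendsto x Filter.atTop (nhds xbar) := by
    rw [Metric.tendsto_atTop]
    intro r hr
    obtain ⟨k0, hk0⟩ := exists_nat_gt (1/r)
    refine ⟨k0, fun k hk => ?_⟩
    have h1 : dist (x k) xbar ≤ 1/(k+1) := Metric.mem_closedBall.mp (hxb k)
    have h2 : (1:ℝ)/(k+1) < r := by
      rw [div_lt_iff₀ (by positivity)]
      rw [div_lt_iff₀ hr] at hk0
      have : (k0:ℝ) ≤ k := by exact_mod_cast hk
      nlinarith
    linarith
  -- compactness of the sphere
  have hsph : ∀ k : ℕ, v k ∈ Metric.sphere (0 : EuclideanSpace ℝ (Fin n)) 1 := by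
    intro k; simpa [mem_sphere_zero_iff_norm] using hv1 k
  obtain ⟨w, hwmem, φ, hφ, hvlim⟩ :=
    (isCompact_sphere (0 : EuclideanSpace ℝ (Fin n)) 1).tendsto_subseq hsph
  have hxφlim : Filter.Tendsto (fun k => x (φ k)) Filter.atTop (nhds xbar) :=
    hxlim.comp hφ.tendsto_atTop
  -- w is in the normal cone at xbar
  have hwN : w ∈ normalCone C xbar := by
    intro y hy
    have htend : Filter.Tendsto (fun k => ⟪v (φ k), y - x (φ k)⟫) Filter.atTop
        (nhds ⟪w, y - xbar⟫) :=
      hvlim.inner (tendsto_const_nhds.sub hxφlim)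
    exact le_of_tendsto htend (Filter.Eventually.of_forall fun k => hvN (φ k) y hy)
  -- contradiction
  have key : ∀ k, ε < ‖v (φ k) - w‖ := by
    intro k
    have hn : (0:ℝ) < ‖xbar - x (φ k)‖ := by
      rw [norm_pos_iff]
      exact sub_ne_zero_of_ne (Ne.symm (hxne (φ k)))
    have h1 : ε * ‖xbar - x (φ k)‖ < -⟪v (φ k), xbar - x (φ k)⟫ := hlt (φ k)
    have h2 : -⟪v (φ k), xbar - x (φ k)⟫ = ⟪v (φ k) - w, x (φ k) - xbar⟫ + ⟪w, x (φ k) - xbar⟫ := by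
      rw [← inner_neg_right]
      rw [show -(xbar - x (φ k)) = x (φ k) - xbar by abel]
      rw [inner_sub_left]; ring
    have h3 : ⟪w, x (φ k) - xbar⟫ ≤ 0 := hwN (x (φ k)) (hxC (φ k))
    have h4 : ⟪v (φ k) - w, x (φ k) - xbar⟫ ≤ ‖v (φ k) - w‖ * ‖x (φ k) - xbar‖ :=
      real_inner_le_norm _ _
    have h5 : ‖x (φ k) - xbar‖ = ‖xbar - x (φ k)‖ := norm_sub_rev _ _
    rw [h5] at h4
    have : ε * ‖xbar - x (φ k)‖ < ‖v (φ k) - w‖ * ‖xbar - x (φ k)‖ := by linarith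
    exact lt_of_mul_lt_mul_right (by linarith [this]) hn.le
  -- but ‖v (φ k) - w‖ → 0
  have : Filter.Tendsto (fun k => ‖v (φ k) - w‖) Filter.atTop (nhds 0) := by
    have := hvlim.sub (tendsto_const_nhds (x := w))
    simpa using this.norm
  obtain ⟨k, hk⟩ := (this.eventually (gt_mem_nhds hε)).exists
  exact absurd hk (not_lt.mpr (key k).le)
end

section
/- Let f: ℝⁿ → ℝ be a convex function that is twice continuously differentiable in a neighborhood of x̄, with f(x̄) = 0 and ∇f(x̄) ≠ 0, and let C = {x : f(x) ≤ 0}. Then C has the second order supporting hyperplane property at x̄: there exist δ > 0 and M > 0 such that for every x ∈ (B(x̄,δ) ∩ C) \ {x̄} and every unit vector v ∈ N_C(x), one has 0 ≤ -⟨v, x̄ - x⟩ ≤ M‖x̄ - x‖². -/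
open RealInnerProductSpace Filter Topology

section aux
variable {n : ℕ}
local notation "E" => EuclideanSpace ℝ (Fin n)

lemma hasDerivAt_line {f : E → ℝ} {g x : E} (hg : HasGradientAt f g x) (u : E) :
    HasDerivAt (fun t : ℝ => f (x + t • u)) ⟪g, u⟫ 0 := by
  have hline : HasDerivAt (fun t : ℝ => x + t • u) u 0 := by
    simpa using ((hasDerivAt_id (0:ℝ)).smul_const u).const_add x
  have hf' : HasFDerivAt f (InnerProductSpace.toDual ℝ _ g) ((fun t : ℝ => x + t • u) 0) := by
    simpa using hg.hasFDerivAt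
  have h := hf'.comp_hasDerivAt (0:ℝ) hline
  simp at h
  exact h

lemma exists_pos_lt {h : ℝ → ℝ} {d : ℝ} (hd : HasDerivAt h d 0) (hneg : d < 0) :
    ∃ t : ℝ, 0 < t ∧ h t < h 0 := by
  rw [hasDerivAt_iff_tendsto_slope] at hd
  have h1 : ∀ᶠ t in 𝓝[≠] (0:ℝ), slope h 0 t < 0 := hd (Iio_mem_nhds hneg)
  have h2 : ∀ᶠ t in 𝓝[>] (0:ℝ), slope h 0 t < 0 :=
    h1.filter_mono (nhdsWithin_mono _ (fun t ht => ne_of_gt ht))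
  obtain ⟨t, ht, hs⟩ := (eventually_mem_nhdsWithin.and h2).exists
  have ht' : (0:ℝ) < t := ht
  refine ⟨t, ht', ?_⟩
  have hdiv : (h t - h 0) / t < 0 := by simpa [slope_def_field] using hs
  rcases div_neg_iff.mp hdiv with ⟨_, hn⟩ | ⟨hn, _⟩
  · linarith
  · linarith

lemma convex_grad_le {f : E → ℝ} (hconv : ConvexOn ℝ Set.univ f)
    {x g : E} (hg : HasGradientAt f g x) (y : E) :
    ⟪g, y - x⟫ ≤ f y - f x := by
  have hder := hasDerivAt_line hg (y - x)
  rw [hasDerivAt_iff_tendsto_slope] at hder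
  have hT : Tendsto (slope (fun t : ℝ => f (x + t • (y - x))) 0) (𝓝[>] (0:ℝ)) (𝓝 ⟪g, y - x⟫) :=
    hder.mono_left (nhdsWithin_mono _ (fun t ht => ne_of_gt ht))
  refine le_of_tendsto hT ?_
  filter_upwards [eventually_mem_nhdsWithin,
    Ioo_mem_nhdsGT_of_mem (by norm_num : (0:ℝ) ∈ Set.Ico 0 1)] with t ht hto
  have ht1 : t < 1 := hto.2
  have hcx : f (x + t • (y - x)) ≤ (1 - t) * f x + t * f y := by
    have := hconv.2 (Set.mem_univ x) (Set.mem_univ y)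
      (by linarith : (0:ℝ) ≤ 1 - t) (le_of_lt ht) (by ring)
    have he : (1 - t) • x + t • y = x + t • (y - x) := by module
    simpa [he, smul_eq_mul] using this
  rw [slope_def_field]
  simp only [sub_zero, zero_smul, add_zero]
  rw [div_le_iff₀ ht]
  nlinarith

end aux

set_option maxHeartbeats 2000000 in
/-- Smoothness implies the second order supporting hyperplane (SOSH) property. -/
theorem smooth_implies_SOSH
    {n : ℕ} (f : EuclideanSpace ℝ (Fin n) → ℝ)
    (hconv : ConvexOn ℝ Set.univ f)
    (xbar : EuclideanSpace ℝ (Fin n))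
    (hsmooth : ContDiffAt ℝ 2 f xbar)
    (hf0 : f xbar = 0) (hgrad : gradient f xbar ≠ 0) :
    ∃ δ > (0:ℝ), ∃ M > (0:ℝ),
      ∀ x ∈ (Metric.closedBall xbar δ ∩ {x | f x ≤ 0}) \ {xbar},
        ∀ v ∈ normalCone {x | f x ≤ 0} x, ‖v‖ = 1 →
          0 ≤ -⟪v, xbar - x⟫ ∧ -⟪v, xbar - x⟫ ≤ M * ‖xbar - x‖ ^ 2 := by
  classical
  have hfd1 : ContDiffAt ℝ 1 (fderiv ℝ f) xbar := hsmooth.fderiv_right (by norm_num)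
  obtain ⟨K, t, ht, hK⟩ := hfd1.exists_lipschitzOnWith
  have hev : ∀ᶠ y in 𝓝 xbar, ContDiffAt ℝ 2 f y := hsmooth.eventually (by decide)
  obtain ⟨ε, hε, hball⟩ := Metric.mem_nhds_iff.mp (Filter.inter_mem ht hev)
  set Kr : ℝ := (K : ℝ) with hKr
  have hKr0 : 0 ≤ Kr := K.coe_nonneg
  set c0 : ℝ := ‖gradient f xbar‖ with hc0
  have hc0pos : 0 < c0 := norm_pos_iff.mpr hgrad
  set δ : ℝ := min (ε/2) (c0 / (2*(Kr+1))) with hδdef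
  have hδpos : 0 < δ := lt_min (by linarith) (by positivity)
  refine ⟨δ, hδpos, 2*(Kr+1)/c0, by positivity, ?_⟩
  rintro x ⟨⟨hxball, hxC⟩, _⟩ v hv hvnorm
  have hxC' : f x ≤ 0 := hxC
  have hxd : ‖x - xbar‖ ≤ δ := by
    rw [← dist_eq_norm]; exact Metric.mem_closedBall.mp hxball
  have hxballε : x ∈ Metric.ball xbar ε := by
    rw [Metric.mem_ball, dist_eq_norm]
    calc ‖x - xbar‖ ≤ δ := hxd
    _ ≤ ε/2 := min_le_left _ _
    _ < ε := by linarith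
  have hxt : x ∈ t := (hball hxballε).1
  have hx2 : ContDiffAt ℝ 2 f x := (hball hxballε).2
  have hxdiff : DifferentiableAt ℝ f x := hx2.differentiableAt (by norm_num)
  have hxg : HasGradientAt f (gradient f x) x := hxdiff.hasGradientAt
  have hxbt : xbar ∈ t := (hball (Metric.mem_ball_self hε)).1
  have hxbdiff : DifferentiableAt ℝ f xbar := hsmooth.differentiableAt (by norm_num)
  have hxbg : HasGradientAt f (gradient f xbar) xbar := hxbdiff.hasGradientAt
  set g : EuclideanSpace ℝ (Fin n) := gradient f x with hgdef
  -- Lipschitz bound on gradients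
  have hlip : ‖g - gradient f xbar‖ ≤ Kr * ‖x - xbar‖ := by
    have hd := hK.dist_le_mul x hxt xbar hxbt
    rw [dist_eq_norm, dist_eq_norm] at hd
    have heq : g - gradient f xbar =
        (InnerProductSpace.toDual ℝ (EuclideanSpace ℝ (Fin n))).symm
          (fderiv ℝ f x - fderiv ℝ f xbar) := by
      simp [hgdef, gradient, map_sub]
    rw [heq, LinearIsometryEquiv.norm_map]
    exact hd
  clear_value g
  have hglb : c0/2 ≤ ‖g‖ := by
    have h1 : ‖g - gradient f xbar‖ ≤ Kr * δ :=
      le_trans hlip (mul_le_mul_of_nonneg_left hxd hKr0)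
    have h2 : Kr * δ ≤ c0/2 := by
      have : δ ≤ c0 / (2*(Kr+1)) := min_le_right _ _
      have h3 : Kr * δ ≤ Kr * (c0 / (2*(Kr+1))) := mul_le_mul_of_nonneg_left this hKr0
      have h4 : Kr * (c0 / (2*(Kr+1))) ≤ c0/2 := by
        rw [← mul_div_assoc, div_le_iff₀ (by positivity)]
        nlinarith
      linarith
    have h5 : c0 - ‖g‖ ≤ ‖g - gradient f xbar‖ := by
      have := norm_sub_norm_le (gradient f xbar) g
      rw [norm_sub_rev] at this
      linarith [this]
    linarith
  have hgpos : 0 < ‖g‖ := lt_of_lt_of_le (by linarith) hglb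
  have hC : xbar ∈ {x | f x ≤ 0} := by simp [hf0]
  -- Property P
  have P : ∀ u : EuclideanSpace ℝ (Fin n), ⟪g, u⟫ < 0 → ⟪v, u⟫ ≤ 0 := by
    intro u hu
    obtain ⟨s, hs, hfs⟩ := exists_pos_lt (hasDerivAt_line hxg u) hu
    have hfs' : f (x + s • u) < f x := by simpa using hfs
    have hmem : f (x + s • u) ≤ 0 := le_of_lt (lt_of_lt_of_le hfs' hxC')
    have hvv := hv _ hmem
    have heq : (x + s • u) - x = s • u := by abel
    rw [heq, real_inner_smul_right] at hvv
    nlinarith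
  have hvg : 0 ≤ ⟪v, g⟫ := by
    have hneg : ⟪g, -g⟫ < 0 := by
      rw [inner_neg_right, real_inner_self_eq_norm_sq]
      nlinarith
    have := P (-g) hneg
    rw [inner_neg_right] at this
    linarith
  have hvgn : ⟪v, g⟫ ≤ ‖g‖ := by
    have := real_inner_le_norm v g
    rwa [hvnorm, one_mul] at this
  have P' : ∀ u : EuclideanSpace ℝ (Fin n), ⟪g, u⟫ ≤ 0 → ⟪v, u⟫ ≤ 0 := by
    intro u hu
    by_contra hpos
    push_neg at hpos
    have key : ⟪v, u⟫ ≤ (⟪v, u⟫/(2*(‖g‖+1))) * ⟪v, g⟫ := by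
      set e : ℝ := ⟪v, u⟫/(2*(‖g‖+1)) with hedef
      have he : 0 < e := by positivity
      have hgu : ⟪g, u - e • g⟫ < 0 := by
        rw [inner_sub_right, real_inner_smul_right, real_inner_self_eq_norm_sq]
        nlinarith [mul_pos he (pow_pos hgpos 2)]
      have := P _ hgu
      rw [inner_sub_right, real_inner_smul_right] at this
      linarith
    have h1 : (⟪v, u⟫/(2*(‖g‖+1))) * ⟪v, g⟫ ≤ (⟪v, u⟫/(2*(‖g‖+1))) * (‖g‖+1) :=
      mul_le_mul_of_nonneg_left (by linarith) (by positivity)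
    have h2 : (⟪v, u⟫/(2*(‖g‖+1))) * (‖g‖+1) = ⟪v, u⟫/2 := by
      field_simp
    linarith
  -- key inequality
  set w : EuclideanSpace ℝ (Fin n) := x - xbar with hwdef
  clear_value w
  have hkey : ⟪g, w⟫ ≤ Kr * ‖w‖^2 := by
    have h1 : ⟪gradient f xbar, w⟫ ≤ f x - f xbar := by rw [hwdef]; exact convex_grad_le hconv hxbg x
    have h2 : ⟪g - gradient f xbar, w⟫ ≤ ‖g - gradient f xbar‖ * ‖w‖ :=
      real_inner_le_norm _ _
    have h3 : ‖g - gradient f xbar‖ * ‖w‖ ≤ (Kr * ‖w‖) * ‖w‖ :=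
      mul_le_mul_of_nonneg_right hlip (norm_nonneg _)
    have h4 : ⟪g - gradient f xbar, w⟫ = ⟪g, w⟫ - ⟪gradient f xbar, w⟫ :=
      inner_sub_left _ _ _
    nlinarith [sq_nonneg ‖w‖]
  -- decomposition
  have hgne : ‖g‖ ≠ 0 := ne_of_gt hgpos
  set c : ℝ := ⟪g, w⟫ / ‖g‖^2 with hcdef
  clear_value c
  have hud : ⟪g, w - c • g⟫ = 0 := by
    rw [inner_sub_right, real_inner_smul_right, real_inner_self_eq_norm_sq, hcdef]
    field_simp
    ring
  have hvu : ⟪v, w - c • g⟫ ≤ 0 := P' _ (le_of_eq hud)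
  have hsplit : ⟪v, w⟫ = ⟪v, w - c • g⟫ + c * ⟪v, g⟫ := by
    rw [inner_sub_right, real_inner_smul_right]; ring
  have hbound : c * ⟪v, g⟫ ≤ (2*(Kr+1)/c0) * ‖w‖^2 := by
    rcases le_or_gt c 0 with hc | hc
    · have h1 : c * ⟪v, g⟫ ≤ 0 := mul_nonpos_of_nonpos_of_nonneg hc hvg
      have h2 : (0:ℝ) ≤ (2*(Kr+1)/c0) * ‖w‖^2 := by positivity
      linarith
    · have h1 : c * ⟪v, g⟫ ≤ c * ‖g‖ := mul_le_mul_of_nonneg_left hvgn hc.le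
      have h2 : c * ‖g‖ = ⟪g, w⟫ / ‖g‖ := by
        rw [hcdef]; field_simp
      have hgw : ⟪g, w⟫ / ‖g‖ ≤ (Kr * ‖w‖^2) / (c0/2) := by
        apply div_le_div₀ (by positivity) hkey (by linarith) hglb
      have h3 : (Kr * ‖w‖^2) / (c0/2) ≤ (2*(Kr+1)/c0) * ‖w‖^2 := by
        rw [div_le_iff₀ (by linarith : (0:ℝ) < c0/2)]
        have : (2*(Kr+1)/c0) * ‖w‖^2 * (c0/2) = (Kr+1) * ‖w‖^2 := by
          field_simp
        rw [this]
        nlinarith [sq_nonneg ‖w‖]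
      linarith
  have hflip : -⟪v, xbar - x⟫ = ⟪v, w⟫ := by
    have : (xbar - x : EuclideanSpace ℝ (Fin n)) = -w := by rw [hwdef]; abel
    rw [this, inner_neg_right, neg_neg]
  have hnw : ‖xbar - x‖ = ‖w‖ := by rw [hwdef, norm_sub_rev]
  have hx0 : ⟪v, xbar - x⟫ ≤ 0 := hv xbar hC
  constructor
  · linarith
  · rw [hflip, hnw, hsplit]
    linarith
end

section
/- Let K_1, …, K_r ⊆ ℝⁿ be closed convex sets, each SOSH at a common point x̄ ∈ K := ∩_{l=1}^r K_l. Suppose the constraint qualification holds at x̄: if v_l ∈ N_{K_l}(x̄) for each l and Σ_{l=1}^r v_l = 0, then v_l = 0 for all l. Then K is SOSH at x̄. -/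
open RealInnerProductSpace

/-- The second order supporting hyperplane (SOSH) property of `C` at `x̄`. -/
def SOSH {n : ℕ} (C : Set (EuclideanSpace ℝ (Fin n))) (xbar : EuclideanSpace ℝ (Fin n)) :
    Prop :=
  ∃ δ > (0:ℝ), ∃ M > (0:ℝ),
    ∀ x ∈ (Metric.closedBall xbar δ ∩ C) \ {xbar},
      ∀ v ∈ normalCone C x, ‖v‖ = 1 →
        0 ≤ -⟪v, xbar - x⟫ ∧ -⟪v, xbar - x⟫ ≤ M * ‖xbar - x‖ ^ 2

section SOSHAux

open Metric Filter Topology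

variable {n : ℕ}

lemma smul_mem_normalCone {C : Set (EuclideanSpace ℝ (Fin n))} {x v : EuclideanSpace ℝ (Fin n)}
    (h : v ∈ normalCone C x) {a : ℝ} (ha : 0 ≤ a) : a • v ∈ normalCone C x := by
  intro y hy
  have hv := h y hy
  rw [real_inner_smul_left]
  exact mul_nonpos_of_nonneg_of_nonpos ha hv

lemma exists_proj {C : Set (EuclideanSpace ℝ (Fin n))} (hconv : Convex ℝ C)
    (hcl : IsClosed C) (hne : C.Nonempty) (y : EuclideanSpace ℝ (Fin n)) :
    ∃ p ∈ C, ‖y - p‖ = Metric.infDist y C ∧ y - p ∈ normalCone C p := by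
  obtain ⟨p, hpC, hmin⟩ := exists_norm_eq_iInf_of_complete_convex hne hcl.isComplete hconv y
  refine ⟨p, hpC, ?_, ?_⟩
  · rw [hmin, Metric.infDist_eq_iInf]
    exact iInf_congr fun w => (dist_eq_norm _ _).symm
  · intro z hz
    exact ((norm_eq_iInf_iff_real_inner_le_zero hconv hpC).1 hmin) z hz

set_option maxHeartbeats 1000000 in
lemma penal_core {r : ℕ} (K : Fin r → Set (EuclideanSpace ℝ (Fin n)))
    (hclosed : ∀ l, IsClosed (K l)) (hconv : ∀ l, Convex ℝ (K l))
    (hKne : ∀ l, (K l).Nonempty)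
    (x v : EuclideanSpace ℝ (Fin n)) (hxKl : ∀ l, x ∈ K l) (k : ℕ) :
    ∃ y : EuclideanSpace ℝ (Fin n), ∃ q : Fin r → EuclideanSpace ℝ (Fin n),
      (∀ l, q l ∈ K l) ∧
      (∀ l, ‖y - q l‖ = Metric.infDist y (K l)) ∧
      (∀ l, y - q l ∈ normalCone (K l) (q l)) ∧
      ‖y - x‖ ≤ 2*‖v‖ ∧
      (∑ l, (Metric.infDist y (K l))^2 ≤ 4*‖v‖^2 * (1/((k:ℝ)+1))) ∧
      (1/2)*‖y - x‖^2 ≤ ⟪v, y - x⟫ ∧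
      ∑ l, ((k:ℝ)+1) • (y - q l) = v - (y - x) := by
  set R : ℝ := 2*‖v‖+1 with hR
  have hR0 : 0 < R := by positivity
  set φf : EuclideanSpace ℝ (Fin n) → ℝ := fun y =>
    -⟪v, y⟫ + (1/2)*‖y - x‖^2 + (((k:ℝ)+1)/2) * ∑ l, (Metric.infDist y (K l))^2 with hφf
  have hcont : Continuous φf := by
    apply Continuous.add
    apply Continuous.add
    · exact (continuous_const.inner continuous_id).neg
    · exact continuous_const.mul (((continuous_id.sub continuous_const).norm).pow 2)
    · exact continuous_const.mul (continuous_finset_sum _ fun l _ =>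
        (Metric.continuous_infDist_pt (K l)).pow 2)
  have hxballR : x ∈ Metric.closedBall x R := by simp [le_of_lt hR0]
  obtain ⟨y, hyball, hymin⟩ :=
    (isCompact_closedBall x R).exists_isMinOn ⟨x, hxballR⟩ hcont.continuousOn
  have hmin := isMinOn_iff.1 hymin
  -- base estimate
  have hzd : ∀ l, Metric.infDist x (K l) = 0 := fun l => Metric.infDist_zero_of_mem (hxKl l)
  have hbase : (1/2)*‖y - x‖^2 + (((k:ℝ)+1)/2) * ∑ l, (Metric.infDist y (K l))^2
      ≤ ⟪v, y - x⟫ := by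
    have h0 := hmin x hxballR
    have hzz : (0:ℝ)^2 = 0 := by norm_num
    simp only [hφf, hzd, sub_self, norm_zero, hzz, Finset.sum_const_zero, mul_zero,
      add_zero] at h0
    have hinner : ⟪v, y - x⟫ = ⟪v, y⟫ - ⟪v, x⟫ := inner_sub_right _ _ _
    linarith
  have hSnn : (0:ℝ) ≤ ∑ l, (Metric.infDist y (K l))^2 := by positivity
  have hip : ⟪v, y - x⟫ ≤ ‖v‖ * ‖y - x‖ := real_inner_le_norm _ _
  have hPnn : (0:ℝ) ≤ (((k:ℝ)+1)/2) * ∑ l, (Metric.infDist y (K l))^2 :=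
    mul_nonneg (by positivity) hSnn
  have h2ab : ‖y - x‖^2 ≤ 2*(‖v‖*‖y - x‖) := by linarith
  have hd2v : ‖y - x‖ ≤ 2*‖v‖ := by
    nlinarith [h2ab, norm_nonneg (y - x), norm_nonneg v]
  have hd2 : ∑ l, (Metric.infDist y (K l))^2 ≤ 4*‖v‖^2 * (1/((k:ℝ)+1)) := by
    have hk : (0:ℝ) < (k:ℝ)+1 := by positivity
    rw [mul_one_div, le_div_iff₀ hk]
    have hab : ‖v‖ * ‖y - x‖ ≤ ‖v‖ * (2*‖v‖) :=
      mul_le_mul_of_nonneg_left hd2v (norm_nonneg v)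
    nlinarith [hbase, hip, hab, sq_nonneg (‖y - x‖)]
  -- projections
  have Hproj : ∀ l, ∃ qq ∈ K l, ‖y - qq‖ = Metric.infDist y (K l) ∧
      y - qq ∈ normalCone (K l) qq := fun l => exists_proj (hconv l) (hclosed l) (hKne l) y
  choose q hqK hqdist hqN using Hproj
  refine ⟨y, q, hqK, hqdist, hqN, hd2v, hd2, by linarith, ?_⟩
  -- stationarity
  set g : EuclideanSpace ℝ (Fin n) := ((∑ l, ((k:ℝ)+1) • (y - q l)) + (y - x)) - v with hg
  have hkey : ∀ h : EuclideanSpace ℝ (Fin n), ∀ t : ℝ, 0 < t → t * ‖h‖ ≤ 1 →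
      0 ≤ t * ⟪g, h⟫ + t^2 * ‖h‖^2 * (1/2 + ((k:ℝ)+1)/2 * r) := by
    intro h t ht hth
    have hzball : y + t • h ∈ Metric.closedBall x R := by
      rw [Metric.mem_closedBall, dist_eq_norm, add_sub_right_comm]
      have hts : ‖t•h‖ = t*‖h‖ := by rw [norm_smul, Real.norm_eq_abs, abs_of_pos ht]
      calc ‖(y - x) + t•h‖ ≤ ‖y - x‖ + ‖t•h‖ := norm_add_le _ _
        _ ≤ 2*‖v‖ + t*‖h‖ := by rw [hts]; linarith
        _ ≤ R := by rw [hR]; linarith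
    have hm := hmin _ hzball
    simp only [hφf] at hm
    have e1 : ⟪v, y + t•h⟫ = ⟪v, y⟫ + t*⟪v, h⟫ := by
      rw [inner_add_right, real_inner_smul_right]
    have e2 : ‖y + t•h - x‖^2 = ‖y - x‖^2 + 2*(t*⟪y - x, h⟫) + t^2*‖h‖^2 := by
      rw [add_sub_right_comm, norm_add_sq_real, real_inner_smul_right, norm_smul,
        Real.norm_eq_abs, abs_of_pos ht, mul_pow]
    have e3 : ∀ l, (Metric.infDist (y + t•h) (K l))^2 ≤
        (Metric.infDist y (K l))^2 + (2*(t*⟪y - q l, h⟫) + t^2*‖h‖^2) := by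
      intro l
      have hle1 : Metric.infDist (y + t•h) (K l) ≤ ‖(y - q l) + t•h‖ := by
        have h2 := Metric.infDist_le_dist_of_mem (x := y + t•h) (hqK l)
        rw [dist_eq_norm] at h2
        have heq : y + t•h - q l = (y - q l) + t•h := by rw [add_sub_right_comm]
        rwa [heq] at h2
      have hsq : (Metric.infDist (y + t•h) (K l))^2 ≤ ‖(y - q l) + t•h‖^2 :=
        pow_le_pow_left₀ Metric.infDist_nonneg hle1 2
      have hexp : ‖(y - q l) + t•h‖^2
          = ‖y - q l‖^2 + 2*(t*⟪y - q l, h⟫) + t^2*‖h‖^2 := by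
        rw [norm_add_sq_real, real_inner_smul_right, norm_smul,
          Real.norm_eq_abs, abs_of_pos ht, mul_pow]
      rw [hqdist l] at hexp
      linarith [hsq, hexp.le]

    have e3sum : ∑ l, (Metric.infDist (y + t•h) (K l))^2 ≤
        ∑ l, (Metric.infDist y (K l))^2
          + (2*(t*(∑ l, ⟪y - q l, h⟫)) + (r:ℝ)*(t^2*‖h‖^2)) := by
      calc ∑ l, (Metric.infDist (y + t•h) (K l))^2
          ≤ ∑ l, ((Metric.infDist y (K l))^2 + (2*(t*⟪y - q l, h⟫) + t^2*‖h‖^2)) :=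
            Finset.sum_le_sum (fun l _ => e3 l)
        _ = _ := by
            rw [Finset.sum_add_distrib, Finset.sum_add_distrib, Finset.sum_const,
              Finset.card_univ, Fintype.card_fin, nsmul_eq_mul, ← Finset.mul_sum,
              ← Finset.mul_sum]
    have eg : ⟪g, h⟫ = ((k:ℝ)+1)*(∑ l, ⟪y - q l, h⟫) + ⟪y - x, h⟫ - ⟪v, h⟫ := by
      rw [hg]
      rw [inner_sub_left, inner_add_left, sum_inner]
      simp only [real_inner_smul_left]
      rw [← Finset.mul_sum]
    have hmul := mul_le_mul_of_nonneg_left e3sum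
      (by positivity : (0:ℝ) ≤ ((k:ℝ)+1)/2)
    rw [eg]
    linarith [hm, e1, e2, hmul]
  -- conclude g = 0
  have hg0 : ∀ h : EuclideanSpace ℝ (Fin n), 0 ≤ ⟪g, h⟫ := by
    intro h
    by_contra hneg
    push_neg at hneg
    set C := ‖h‖^2 * (1/2 + ((k:ℝ)+1)/2 * r) with hC
    have hC0 : (0:ℝ) ≤ C := by positivity
    have hipneg : (0:ℝ) < -⟪g, h⟫ := by linarith
    set t := min (1/(‖h‖+1)) (-⟪g,h⟫/(2*(C+1))) with htdef
    have ht : 0 < t := lt_min (by positivity) (div_pos hipneg (by positivity))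
    have hth : t*‖h‖ ≤ 1 := by
      have h1 : t ≤ 1/(‖h‖+1) := min_le_left _ _
      have h2 : t*(‖h‖+1) ≤ 1 := by
        rw [← le_div_iff₀ (by positivity : (0:ℝ) < ‖h‖+1)]
        exact h1
      nlinarith [norm_nonneg h, ht.le]
    have hk2 := hkey h t ht hth
    have ht2 : t ≤ -⟪g,h⟫/(2*(C+1)) := min_le_right _ _
    have h4 : t*(C+1) ≤ -⟪g,h⟫/2 := by
      have hC1 : (0:ℝ) < C + 1 := by linarith
      have h5 := mul_le_mul_of_nonneg_right ht2 hC1.le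
      have h6 : (-⟪g,h⟫/(2*(C+1)))*(C+1) = -⟪g,h⟫/2 := by
        field_simp
      linarith [h5, h6.le, h6.ge]
    have hk2' : 0 ≤ t*⟪g,h⟫ + t^2*C := by rw [hC]; linarith [hk2]
    linarith [hk2', mul_le_mul_of_nonneg_left h4 ht.le, mul_pos ht hipneg,
      mul_pos ht ht]
  have hgneg := hg0 (-g)
  rw [inner_neg_right] at hgneg
  have hip0 : ⟪g, g⟫ = 0 :=
    le_antisymm (by linarith) real_inner_self_nonneg
  have hgz : g = 0 := inner_self_eq_zero.1 hip0
  rw [hg] at hgz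
  have := sub_eq_zero.1 hgz
  exact eq_sub_of_add_eq this

lemma normalCone_of_tendsto {C : Set (EuclideanSpace ℝ (Fin n))}
    {p w : ℕ → EuclideanSpace ℝ (Fin n)} {p0 w0 : EuclideanSpace ℝ (Fin n)}
    (hp : Tendsto p atTop (𝓝 p0)) (hw : Tendsto w atTop (𝓝 w0))
    (hmem : ∀ k, w k ∈ normalCone C (p k)) : w0 ∈ normalCone C p0 := by
  intro y hy
  have ht : Tendsto (fun k => (⟪w k, y - p k⟫ : ℝ)) atTop (𝓝 ⟪w0, y - p0⟫) :=
    hw.inner (tendsto_const_nhds.sub hp)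
  exact le_of_tendsto ht (Filter.Eventually.of_forall fun k => hmem k y hy)

lemma uniformCQ {r : ℕ} (K : Fin r → Set (EuclideanSpace ℝ (Fin n)))
    (xbar : EuclideanSpace ℝ (Fin n))
    (hCQ : ∀ v : Fin r → EuclideanSpace ℝ (Fin n),
      (∀ l, v l ∈ normalCone (K l) xbar) → ∑ l, v l = 0 → ∀ l, v l = 0) :
    ∃ δ > (0:ℝ), ∃ c > (0:ℝ), ∀ p w : Fin r → EuclideanSpace ℝ (Fin n),
      (∀ l, p l ∈ K l ∩ Metric.closedBall xbar δ) →
      (∀ l, w l ∈ normalCone (K l) (p l)) →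
      ∑ l, ‖w l‖ ≤ c * ‖∑ l, w l‖ := by
  by_contra hcon
  push_neg at hcon
  have H : ∀ k : ℕ, ∃ p w : Fin r → EuclideanSpace ℝ (Fin n),
      (∀ l, p l ∈ K l ∩ Metric.closedBall xbar (1/((k:ℝ)+1))) ∧
      (∀ l, w l ∈ normalCone (K l) (p l)) ∧
      ((k:ℝ)+1) * ‖∑ l, w l‖ < ∑ l, ‖w l‖ := by
    intro k
    obtain ⟨p, w, h1, h2, h3⟩ := hcon (1/((k:ℝ)+1)) (by positivity) ((k:ℝ)+1) (by positivity)
    exact ⟨p, w, h1, h2, h3⟩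
  choose p w h1 h2 h3 using H
  set s : ℕ → ℝ := fun k => ∑ l, ‖w k l‖ with hs
  have hspos : ∀ k, 0 < s k := fun k =>
    lt_of_le_of_lt (by positivity) (h3 k)
  set u : ℕ → Fin r → EuclideanSpace ℝ (Fin n) := fun k l => (s k)⁻¹ • w k l with hu
  have husum : ∀ k, ∑ l, ‖u k l‖ = 1 := by
    intro k
    simp only [hu, norm_smul, Real.norm_eq_abs, abs_of_pos (inv_pos.2 (hspos k))]
    rw [← Finset.mul_sum]
    exact inv_mul_cancel₀ (hspos k).ne'
  have husumv : ∀ k, ‖∑ l, u k l‖ < 1/((k:ℝ)+1) := by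
    intro k
    simp only [hu, ← Finset.smul_sum, norm_smul, Real.norm_eq_abs,
      abs_of_pos (inv_pos.2 (hspos k))]
    rw [inv_mul_lt_iff₀ (hspos k)]
    calc ‖∑ l, w k l‖ = (((k:ℝ)+1))⁻¹ * (((k:ℝ)+1) * ‖∑ l, w k l‖) := by
          field_simp
      _ < (((k:ℝ)+1))⁻¹ * s k := by
          apply mul_lt_mul_of_pos_left (h3 k) (by positivity)
      _ = s k * (1/((k:ℝ)+1)) := by ring
  have humem : ∀ k l, u k l ∈ normalCone (K l) (p k l) :=
    fun k l => smul_mem_normalCone (h2 k l) (le_of_lt (inv_pos.2 (hspos k)))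
  have hule : ∀ k l, ‖u k l‖ ≤ 1 := by
    intro k l
    calc ‖u k l‖ ≤ ∑ j, ‖u k j‖ :=
          Finset.single_le_sum (fun j _ => norm_nonneg _) (Finset.mem_univ l)
      _ = 1 := husum k
  -- compactness in the product space
  set Q : ℕ → (Fin r → EuclideanSpace ℝ (Fin n)) × (Fin r → EuclideanSpace ℝ (Fin n)) :=
    fun k => (p k, u k) with hQ
  have hQmem : ∀ k, Q k ∈ Metric.closedBall ((fun _ => xbar, fun _ => 0) :
      (Fin r → EuclideanSpace ℝ (Fin n)) × (Fin r → EuclideanSpace ℝ (Fin n))) 1 := by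
    intro k
    rw [mem_closedBall, Prod.dist_eq, max_le_iff]
    constructor
    · rw [dist_pi_le_iff zero_le_one]
      intro l
      have := (h1 k l).2
      rw [mem_closedBall] at this
      refine this.trans ?_
      rw [div_le_one (by positivity)]
      have hk : (0:ℝ) ≤ (k:ℝ) := Nat.cast_nonneg k
      linarith
    · rw [dist_pi_le_iff zero_le_one]
      intro l
      rw [dist_zero_right]
      exact hule k l
  obtain ⟨⟨P0, U0⟩, _, φ, hφmono, hφtend⟩ :=
    (isCompact_closedBall _ _).tendsto_subseq hQmem
  have hPt : Tendsto (fun k => p (φ k)) atTop (𝓝 P0) :=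
    (continuous_fst.tendsto _).comp hφtend
  have hUt : Tendsto (fun k => u (φ k)) atTop (𝓝 U0) :=
    (continuous_snd.tendsto _).comp hφtend
  have hPl : ∀ l, Tendsto (fun k => p (φ k) l) atTop (𝓝 (P0 l)) :=
    fun l => (tendsto_pi_nhds.1 hPt) l
  have hUl : ∀ l, Tendsto (fun k => u (φ k) l) atTop (𝓝 (U0 l)) :=
    fun l => (tendsto_pi_nhds.1 hUt) l
  have hone : Tendsto (fun k : ℕ => 1/((k:ℝ)+1)) atTop (𝓝 0) :=
    tendsto_one_div_add_atTop_nhds_zero_nat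
  have honeφ : Tendsto (fun k : ℕ => 1/((φ k:ℝ)+1)) atTop (𝓝 0) := by
    apply squeeze_zero (fun k => by positivity) (fun k => ?_) hone
    have hle : (k:ℝ) + 1 ≤ (φ k : ℝ) + 1 := by
      have h' : k ≤ φ k := hφmono.le_apply
      have : (k:ℝ) ≤ (φ k : ℝ) := by exact_mod_cast h'
      linarith
    exact one_div_le_one_div_of_le (by positivity) hle
  -- limits of p coordinates are xbar
  have hPx : ∀ l, P0 l = xbar := by
    intro l
    have hdist : Tendsto (fun k => dist (p (φ k) l) xbar) atTop (𝓝 0) := by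
      apply squeeze_zero (fun k => dist_nonneg) (fun k => ?_) honeφ
      exact mem_closedBall.1 (h1 (φ k) l).2
    have : Tendsto (fun k => p (φ k) l) atTop (𝓝 xbar) :=
      tendsto_iff_dist_tendsto_zero.2 hdist
    exact tendsto_nhds_unique (hPl l) this
  have hUmem : ∀ l, U0 l ∈ normalCone (K l) xbar := by
    intro l
    rw [← hPx l]
    exact normalCone_of_tendsto (hPl l) (hUl l) (fun k => humem (φ k) l)
  have hUsum : ∑ l, U0 l = 0 := by
    have h1t : Tendsto (fun k => ∑ l, u (φ k) l) atTop (𝓝 (∑ l, U0 l)) :=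
      tendsto_finset_sum _ (fun l _ => hUl l)
    have h2t : Tendsto (fun k => ∑ l, u (φ k) l) atTop (𝓝 0) := by
      rw [tendsto_zero_iff_norm_tendsto_zero]
      exact squeeze_zero (fun k => norm_nonneg _)
        (fun k => le_of_lt (husumv (φ k))) honeφ
    exact tendsto_nhds_unique h1t h2t
  have hUzero : ∀ l, U0 l = 0 := hCQ U0 hUmem hUsum
  have hnt : Tendsto (fun k => ∑ l, ‖u (φ k) l‖) atTop (𝓝 (∑ l, ‖U0 l‖)) :=
    tendsto_finset_sum _ (fun l _ => (hUl l).norm)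
  have hconst : Tendsto (fun k => ∑ l, ‖u (φ k) l‖) atTop (𝓝 1) := by
    simp only [husum]
    exact tendsto_const_nhds
  have h1eq : (∑ l, ‖U0 l‖) = 1 := tendsto_nhds_unique hnt hconst
  simp [hUzero] at h1eq

lemma exists_pos_forall_le {r : ℕ} (a : ℝ) (ha : 0 < a) (f : Fin r → ℝ) (hf : ∀ l, 0 < f l) :
    ∃ ε > (0:ℝ), ε ≤ a ∧ ∀ l, ε ≤ f l := by
  rcases isEmpty_or_nonempty (Fin r) with h | h
  · exact ⟨a, ha, le_refl a, fun l => (h.false l).elim⟩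
  · have hne : (Finset.univ : Finset (Fin r)).Nonempty := Finset.univ_nonempty
    set m := Finset.univ.inf' hne f with hm
    have hmpos : 0 < m := (Finset.lt_inf'_iff hne).2 fun l _ => hf l
    exact ⟨min a m, lt_min ha hmpos, min_le_left _ _,
      fun l => le_trans (min_le_right _ _) (Finset.inf'_le f (Finset.mem_univ l))⟩


lemma tendsto_one_div_subseq (φ : ℕ → ℕ) (hφ : StrictMono φ) :
    Tendsto (fun k : ℕ => 1/((φ k:ℝ)+1)) atTop (𝓝 0) := by
  apply squeeze_zero (fun k => by positivity) (fun k => ?_)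
    tendsto_one_div_add_atTop_nhds_zero_nat
  have h' : k ≤ φ k := hφ.le_apply
  have hc : (k:ℝ) ≤ (φ k : ℝ) := by exact_mod_cast h'
  exact one_div_le_one_div_of_le (by positivity) (by linarith)

lemma decomp {r : ℕ} (K : Fin r → Set (EuclideanSpace ℝ (Fin n)))
    (hclosed : ∀ l, IsClosed (K l)) (hconv : ∀ l, Convex ℝ (K l))
    (xbar : EuclideanSpace ℝ (Fin n)) (hxbar : xbar ∈ ⋂ l, K l)
    (hCQ : ∀ v : Fin r → EuclideanSpace ℝ (Fin n),
      (∀ l, v l ∈ normalCone (K l) xbar) → ∑ l, v l = 0 → ∀ l, v l = 0) :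
    ∃ δ > (0:ℝ), ∃ c > (0:ℝ), ∀ x ∈ (⋂ l, K l) ∩ Metric.closedBall xbar δ,
      ∀ v ∈ normalCone (⋂ l, K l) x, ∃ w : Fin r → EuclideanSpace ℝ (Fin n),
        (∀ l, w l ∈ normalCone (K l) x) ∧ ∑ l, w l = v ∧ ∀ l, ‖w l‖ ≤ c * ‖v‖ := by
  obtain ⟨δ, hδ, c, hc, hbound⟩ := uniformCQ K xbar hCQ
  refine ⟨δ/2, by positivity, c, hc, ?_⟩
  rintro x ⟨hxK, hxball⟩ v hv
  have hxKl : ∀ l, x ∈ K l := fun l => Set.mem_iInter.1 hxK l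
  have hKne : ∀ l, (K l).Nonempty := fun l => ⟨xbar, Set.mem_iInter.1 hxbar l⟩
  choose y q hqK hqdist hqN hyx hd2 hylow hstat using
    fun k : ℕ => penal_core K hclosed hconv hKne x v hxKl k
  -- first subsequence: y converges to x
  have hyball : ∀ k, y k ∈ Metric.closedBall x (2*‖v‖) := by
    intro k
    rw [mem_closedBall, dist_eq_norm]
    exact hyx k
  obtain ⟨yhat, _, φ1, hφ1, hytend⟩ :=
    (isCompact_closedBall x (2*‖v‖)).tendsto_subseq hyball
  have honeφ := tendsto_one_div_subseq φ1 hφ1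
  have hdsq : ∀ k l, (Metric.infDist (y k) (K l))^2 ≤ 4*‖v‖^2 * (1/((k:ℝ)+1)) := by
    intro k l
    exact le_trans (Finset.single_le_sum (f := fun j => (Metric.infDist (y k) (K j))^2)
      (fun j _ => sq_nonneg _) (Finset.mem_univ l)) (hd2 k)
  have hdl : ∀ l, Tendsto (fun k => Metric.infDist (y (φ1 k)) (K l)) atTop (𝓝 0) := by
    intro l
    have hsq : Tendsto (fun k => (Metric.infDist (y (φ1 k)) (K l))^2) atTop (𝓝 0) := by
      apply squeeze_zero (fun k => sq_nonneg _) (fun k => hdsq (φ1 k) l)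
      simpa using honeφ.const_mul (4*‖v‖^2)
    have hs : Tendsto (fun k => Real.sqrt ((Metric.infDist (y (φ1 k)) (K l))^2))
        atTop (𝓝 (Real.sqrt 0)) := (Real.continuous_sqrt.tendsto 0).comp hsq
    simpa [Real.sqrt_sq Metric.infDist_nonneg, Real.sqrt_zero] using hs
  have hyhatK : ∀ l, yhat ∈ K l := by
    intro l
    have h1 : Tendsto (fun k => Metric.infDist (y (φ1 k)) (K l)) atTop
        (𝓝 (Metric.infDist yhat (K l))) :=
      ((Metric.continuous_infDist_pt (K l)).tendsto yhat).comp hytend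
    have h0 : Metric.infDist yhat (K l) = 0 := tendsto_nhds_unique h1 (hdl l)
    exact ((hclosed l).mem_iff_infDist_zero (hKne l)).2 h0
  have hyhat : yhat = x := by
    have hT1 : Tendsto (fun k => (1/2)*‖y (φ1 k) - x‖^2) atTop
        (𝓝 ((1/2)*‖yhat - x‖^2)) :=
      (((hytend.sub tendsto_const_nhds).norm.pow 2).const_mul (1/2))
    have hT2 : Tendsto (fun k => (⟪v, y (φ1 k) - x⟫ : ℝ)) atTop (𝓝 ⟪v, yhat - x⟫) :=
      tendsto_const_nhds.inner (hytend.sub tendsto_const_nhds)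
    have h0 : (1/2)*‖yhat - x‖^2 ≤ ⟪v, yhat - x⟫ :=
      le_of_tendsto_of_tendsto' hT1 hT2 (fun k => hylow (φ1 k))
    have hvy : (⟪v, yhat - x⟫ : ℝ) ≤ 0 := hv yhat (Set.mem_iInter.2 hyhatK)
    have hn : ‖yhat - x‖^2 ≤ 0 := by linarith
    have : ‖yhat - x‖ = 0 := by nlinarith [norm_nonneg (yhat - x)]
    have := norm_sub_eq_zero_iff.1 this
    exact this
  rw [hyhat] at hytend
  -- q converges to x
  have hqt : ∀ l, Tendsto (fun k => q (φ1 k) l) atTop (𝓝 x) := by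
    intro l
    have hz : Tendsto (fun k => y (φ1 k) - q (φ1 k) l) atTop (𝓝 0) := by
      rw [tendsto_zero_iff_norm_tendsto_zero]
      have : (fun k => ‖y (φ1 k) - q (φ1 k) l‖)
          = fun k => Metric.infDist (y (φ1 k)) (K l) := by
        funext k; exact hqdist (φ1 k) l
      rw [this]
      exact hdl l
    have := hytend.sub hz
    simpa using this
  -- eventually q is in the closed ball around xbar
  have hball : Metric.ball xbar δ ∈ 𝓝 x := by
    apply Metric.isOpen_ball.mem_nhds
    rw [mem_ball]
    have := mem_closedBall.1 hxball
    linarith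
  have hev : ∀ᶠ k in atTop, ∀ l, q (φ1 k) l ∈ Metric.closedBall xbar δ := by
    rw [eventually_all]
    intro l
    filter_upwards [(hqt l).eventually_mem hball] with k hk
    exact ball_subset_closedBall hk
  obtain ⟨N, hN⟩ := eventually_atTop.1 hev
  -- second subsequence on the scaled normals
  set W : ℕ → Fin r → EuclideanSpace ℝ (Fin n) :=
    fun k l => ((φ1 (k+N):ℝ)+1) • (y (φ1 (k+N)) - q (φ1 (k+N)) l) with hW
  have hWmem : ∀ k l, W k l ∈ normalCone (K l) (q (φ1 (k+N)) l) :=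
    fun k l => smul_mem_normalCone (hqN (φ1 (k+N)) l) (by positivity)
  have hWsum : ∀ k, ∑ l, W k l = v - (y (φ1 (k+N)) - x) := fun k => hstat (φ1 (k+N))
  have hWb : ∀ k, ∑ l, ‖W k l‖ ≤ c * ‖∑ l, W k l‖ := by
    intro k
    apply hbound (fun l => q (φ1 (k+N)) l) (W k)
    · intro l
      exact ⟨hqK (φ1 (k+N)) l, hN (k+N) (Nat.le_add_left N k) l⟩
    · intro l
      exact hWmem k l
  have hWnorm : ∀ k, ‖∑ l, W k l‖ ≤ 3*‖v‖ := by
    intro k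
    rw [hWsum k]
    calc ‖v - (y (φ1 (k+N)) - x)‖ ≤ ‖v‖ + ‖y (φ1 (k+N)) - x‖ := norm_sub_le _ _
      _ ≤ 3*‖v‖ := by linarith [hyx (φ1 (k+N))]
  have hWball : ∀ k, W k ∈ Metric.closedBall (0 : Fin r → EuclideanSpace ℝ (Fin n))
      (c * (3*‖v‖)) := by
    intro k
    rw [mem_closedBall, dist_pi_le_iff (by positivity)]
    intro l
    simp only [Pi.zero_apply, dist_zero_right]
    calc ‖W k l‖ ≤ ∑ j, ‖W k j‖ :=
          Finset.single_le_sum (fun j _ => norm_nonneg _) (Finset.mem_univ l)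
      _ ≤ c * ‖∑ j, W k j‖ := hWb k
      _ ≤ c * (3*‖v‖) := mul_le_mul_of_nonneg_left (hWnorm k) hc.le
  obtain ⟨W0, _, φ2, hφ2, hWtend⟩ := (isCompact_closedBall _ _).tendsto_subseq hWball
  have hWl : ∀ l, Tendsto (fun k => W (φ2 k) l) atTop (𝓝 (W0 l)) :=
    fun l => (tendsto_pi_nhds.1 hWtend) l
  have hshift : Tendsto (fun k => φ1 (φ2 k + N)) atTop atTop :=
    (hφ1.tendsto_atTop).comp ((tendsto_add_atTop_nat N).comp hφ2.tendsto_atTop)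
  have hyφ2 : Tendsto (fun k => y (φ1 (φ2 k + N))) atTop (𝓝 x) :=
    hytend.comp ((tendsto_add_atTop_nat N).comp hφ2.tendsto_atTop)
  have hqφ2 : ∀ l, Tendsto (fun k => q (φ1 (φ2 k + N)) l) atTop (𝓝 x) :=
    fun l => (hqt l).comp ((tendsto_add_atTop_nat N).comp hφ2.tendsto_atTop)
  have hW0mem : ∀ l, W0 l ∈ normalCone (K l) x :=
    fun l => normalCone_of_tendsto (hqφ2 l) (hWl l) (fun k => hWmem (φ2 k) l)
  have hW0sum : ∑ l, W0 l = v := by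
    have hsum1 : Tendsto (fun k => ∑ l, W (φ2 k) l) atTop (𝓝 (∑ l, W0 l)) :=
      tendsto_finset_sum _ (fun l _ => hWl l)
    have hsum2 : Tendsto (fun k => ∑ l, W (φ2 k) l) atTop (𝓝 v) := by
      have : Tendsto (fun k => v - (y (φ1 (φ2 k + N)) - x)) atTop (𝓝 v) := by
        have h1 := hyφ2.sub (tendsto_const_nhds (x := x))
        have h2 := (tendsto_const_nhds (x := v)).sub h1
        simpa using h2
      refine this.congr (fun k => ?_)
      exact (hWsum (φ2 k)).symm
    exact tendsto_nhds_unique hsum1 hsum2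
  refine ⟨W0, hW0mem, hW0sum, ?_⟩
  have hfin : ∑ l, ‖W0 l‖ ≤ c * ‖∑ l, W0 l‖ := by
    apply hbound (fun _ => x) W0
    · intro l
      refine ⟨hxKl l, ?_⟩
      exact closedBall_subset_closedBall (by linarith) hxball
    · intro l
      exact hW0mem l
  rw [hW0sum] at hfin
  intro l
  exact le_trans (Finset.single_le_sum (fun j _ => norm_nonneg _) (Finset.mem_univ l)) hfin

/-- SOSH is preserved under intersection, under a constraint qualification. -/
theorem SOSH_intersection
    {n r : ℕ} (K : Fin r → Set (EuclideanSpace ℝ (Fin n)))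
    (hclosed : ∀ l, IsClosed (K l)) (hconv : ∀ l, Convex ℝ (K l))
    (xbar : EuclideanSpace ℝ (Fin n)) (hxbar : xbar ∈ ⋂ l, K l)
    (hsosh : ∀ l, SOSH (K l) xbar)
    (hCQ : ∀ v : Fin r → EuclideanSpace ℝ (Fin n),
      (∀ l, v l ∈ normalCone (K l) xbar) → ∑ l, v l = 0 → ∀ l, v l = 0) :
    SOSH (⋂ l, K l) xbar := by
  obtain ⟨δd, hδd, c, hc, hdec⟩ := decomp K hclosed hconv xbar hxbar hCQ
  choose δs hδs Ms hMs hS using hsosh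
  obtain ⟨ε, hε, hεd, hεs⟩ := exists_pos_forall_le δd hδd δs hδs
  have hMsum : (0:ℝ) ≤ ∑ l, Ms l := Finset.sum_nonneg fun l _ => (hMs l).le
  refine ⟨ε, hε, 1 + c * ∑ l, Ms l, by nlinarith [mul_nonneg hc.le hMsum], ?_⟩
  rintro x ⟨⟨hxball, hxK⟩, hxne⟩ v hv hv1
  constructor
  · have := hv xbar hxbar
    linarith
  · obtain ⟨w, hwmem, hwsum, hwle⟩ := hdec x
      ⟨hxK, Metric.closedBall_subset_closedBall hεd hxball⟩ v hv
    have hterm : ∀ l, -⟪w l, xbar - x⟫ ≤ c * Ms l * ‖xbar - x‖^2 := by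
      intro l
      by_cases hw : w l = 0
      · rw [hw]
        simp only [inner_zero_left, neg_zero]
        exact mul_nonneg (mul_nonneg hc.le (hMs l).le) (sq_nonneg _)
      · have hnw : (0:ℝ) < ‖w l‖ := norm_pos_iff.2 hw
        have hun : ‖(‖w l‖⁻¹ • w l)‖ = 1 := norm_smul_inv_norm hw
        have humem : ‖w l‖⁻¹ • w l ∈ normalCone (K l) x :=
          smul_mem_normalCone (hwmem l) (by positivity)
        have hxm : x ∈ (Metric.closedBall xbar (δs l) ∩ K l) \ {xbar} :=
          ⟨⟨Metric.closedBall_subset_closedBall (hεs l) hxball,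
            Set.mem_iInter.1 hxK l⟩, hxne⟩
        obtain ⟨h1, h2⟩ := hS l x hxm _ humem hun
        have hwu : (⟪w l, xbar - x⟫ : ℝ) = ‖w l‖ * ⟪‖w l‖⁻¹ • w l, xbar - x⟫ := by
          rw [real_inner_smul_left, mul_inv_cancel_left₀ hnw.ne']
        have hwlec : ‖w l‖ ≤ c := by
          have := hwle l
          rwa [hv1, mul_one] at this
        rw [hwu]
        have h3 : ‖w l‖ * (-⟪‖w l‖⁻¹ • w l, xbar - x⟫) ≤ ‖w l‖ * (Ms l * ‖xbar - x‖^2) :=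
          mul_le_mul_of_nonneg_left h2 hnw.le
        have h4 : ‖w l‖ * (Ms l * ‖xbar - x‖^2) ≤ c * (Ms l * ‖xbar - x‖^2) :=
          mul_le_mul_of_nonneg_right hwlec (mul_nonneg (hMs l).le (sq_nonneg _))
        linarith [h3, h4]
    have hsum : -⟪v, xbar - x⟫ = ∑ l, -⟪w l, xbar - x⟫ := by
      rw [← hwsum, sum_inner, Finset.sum_neg_distrib]
    rw [hsum]
    calc ∑ l, -⟪w l, xbar - x⟫ ≤ ∑ l, c * Ms l * ‖xbar - x‖^2 :=
          Finset.sum_le_sum (fun l _ => hterm l)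
      _ = (c * ∑ l, Ms l) * ‖xbar - x‖^2 := by rw [Finset.mul_sum, Finset.sum_mul]
      _ ≤ (1 + c * ∑ l, Ms l) * ‖xbar - x‖^2 := by
          linarith [sq_nonneg ‖xbar - x‖]

end SOSHAux
end

section
/- Let K_1, …, K_r ⊆ ℝⁿ be closed convex sets with x̄ ∈ K := ∩_{l=1}^r K_l, and suppose that whenever v_l ∈ N_{K_l}(x̄) satisfy Σ_{l=1}^r v_l = 0, then all v_l = 0. Then there exists δ > 0 such that for every x ∈ K ∩ B(x̄,δ), the implication also holds at x: if v_l ∈ N_{K_l}(x) and Σ_{l=1}^r v_l = 0, then v_l = 0 for all l. -/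
open RealInnerProductSpace

/-- The constraint qualification at `x̄` propagates to all nearby points of the
intersection. -/
theorem CQ_local
    {n r : ℕ} (K : Fin r → Set (EuclideanSpace ℝ (Fin n)))
    (hclosed : ∀ l, IsClosed (K l)) (hconv : ∀ l, Convex ℝ (K l))
    (xbar : EuclideanSpace ℝ (Fin n)) (hxbar : xbar ∈ ⋂ l, K l)
    (hCQ : ∀ v : Fin r → EuclideanSpace ℝ (Fin n),
      (∀ l, v l ∈ normalCone (K l) xbar) → ∑ l, v l = 0 → ∀ l, v l = 0) :
    ∃ δ > (0:ℝ), ∀ x ∈ (⋂ l, K l) ∩ Metric.closedBall xbar δ,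
      ∀ v : Fin r → EuclideanSpace ℝ (Fin n),
        (∀ l, v l ∈ normalCone (K l) x) → ∑ l, v l = 0 → ∀ l, v l = 0 := by
  by_contra h
  push_neg at h
  have key : ∀ k : ℕ, ∃ x : EuclideanSpace ℝ (Fin n),
      (∀ l, x ∈ K l) ∧ dist x xbar ≤ 1 / (k + 1) ∧
      ∃ v : Fin r → EuclideanSpace ℝ (Fin n),
        (∀ l, v l ∈ normalCone (K l) x) ∧ ∑ l, v l = 0 ∧ ∃ l, v l ≠ 0 := by
    intro k
    have hk : (0:ℝ) < 1 / (k + 1) := by positivity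
    obtain ⟨x, hx, v, hv1, hv2, hv3⟩ := h (1 / (k + 1)) hk
    refine ⟨x, ?_, ?_, v, hv1, hv2, hv3⟩
    · intro l; exact Set.mem_iInter.mp hx.1 l
    · exact Metric.mem_closedBall.mp hx.2
  choose x hxK hxd v hvN hvsum lbad hvne using key

  set s : ℕ → ℝ := fun k => ∑ l : Fin r, ‖v k l‖ with hs
  have hspos : ∀ k, 0 < s k := by
    intro k
    have hl : v k (lbad k) ≠ 0 := hvne k
    have : 0 < ‖v k (lbad k)‖ := norm_pos_iff.mpr hl
    exact lt_of_lt_of_le this (Finset.single_le_sum (fun i _ => norm_nonneg _)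
      (Finset.mem_univ (lbad k)))
  set w : ℕ → Fin r → EuclideanSpace ℝ (Fin n) := fun k l => (s k)⁻¹ • v k l with hw
  have hwnorm : ∀ k, ∑ l, ‖w k l‖ = 1 := by
    intro k
    simp only [hw, norm_smul, Real.norm_eq_abs, abs_inv, abs_of_pos (hspos k),
      ← Finset.mul_sum]
    exact inv_mul_cancel₀ (hspos k).ne'
  have hwN : ∀ k l, w k l ∈ normalCone (K l) (x k) := by
    intro k l y hy
    have := hvN k l y hy
    have h1 : ⟪w k l, y - x k⟫ = (s k)⁻¹ * ⟪v k l, y - x k⟫ := real_inner_smul_left _ _ _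
    rw [h1]
    exact mul_nonpos_of_nonneg_of_nonpos (inv_nonneg.mpr (hspos k).le) this
  have hwsum : ∀ k, ∑ l, w k l = 0 := by
    intro k
    simp only [hw, ← Finset.smul_sum, hvsum k, smul_zero]
  have hwball : ∀ k, w k ∈ Metric.closedBall (0 : Fin r → EuclideanSpace ℝ (Fin n)) 1 := by
    intro k
    rw [Metric.mem_closedBall, dist_zero_right, pi_norm_le_iff_of_nonneg zero_le_one]
    intro l
    calc ‖w k l‖ ≤ ∑ i, ‖w k i‖ :=
          Finset.single_le_sum (fun i _ => norm_nonneg _) (Finset.mem_univ l)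
      _ = 1 := hwnorm k
  obtain ⟨wb, -, φ, hφmono, hφlim⟩ :=
    (isCompact_closedBall (0 : Fin r → EuclideanSpace ℝ (Fin n)) 1).tendsto_subseq hwball
  have hcomp : ∀ l, Filter.Tendsto (fun j => w (φ j) l) Filter.atTop (nhds (wb l)) :=
    fun l => ((continuous_apply l).continuousAt.tendsto).comp hφlim
  have hxlim : Filter.Tendsto (fun j => x (φ j)) Filter.atTop (nhds xbar) := by
    rw [tendsto_iff_dist_tendsto_zero]
    have h0 : Filter.Tendsto (fun j : ℕ => 1 / ((φ j : ℝ) + 1)) Filter.atTop (nhds 0) := by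
      apply Filter.Tendsto.comp tendsto_one_div_add_atTop_nhds_zero_nat
      exact hφmono.tendsto_atTop
    refine squeeze_zero (fun j => dist_nonneg) (fun j => hxd (φ j)) h0
  -- limit facts
  have hbsum : ∑ l, wb l = 0 := by
    have : Filter.Tendsto (fun j => ∑ l, w (φ j) l) Filter.atTop (nhds (∑ l, wb l)) :=
      tendsto_finset_sum _ (fun l _ => hcomp l)
    have h2 : Filter.Tendsto (fun _ : ℕ => (0 : EuclideanSpace ℝ (Fin n))) Filter.atTop (nhds (0 : EuclideanSpace ℝ (Fin n))) :=
      tendsto_const_nhds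
    refine tendsto_nhds_unique ?_ h2
    simpa only [hwsum] using this
  have hbnorm : ∑ l, ‖wb l‖ = 1 := by
    have : Filter.Tendsto (fun j => ∑ l, ‖w (φ j) l‖) Filter.atTop (nhds (∑ l, ‖wb l‖)) :=
      tendsto_finset_sum _ (fun l _ => (hcomp l).norm)
    have h2 : Filter.Tendsto (fun _ : ℕ => (1:ℝ)) Filter.atTop (nhds (1:ℝ)) :=
      tendsto_const_nhds
    refine tendsto_nhds_unique ?_ h2
    simpa only [hwnorm] using this
  have hbN : ∀ l, wb l ∈ normalCone (K l) xbar := by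
    intro l y hy
    have hterm : ∀ j, ⟪w (φ j) l, y - x (φ j)⟫ ≤ 0 := fun j => hwN (φ j) l y hy
    have hlim : Filter.Tendsto (fun j => ⟪w (φ j) l, y - x (φ j)⟫) Filter.atTop
        (nhds ⟪wb l, y - xbar⟫) :=
      Filter.Tendsto.inner (hcomp l) (Filter.Tendsto.const_sub y hxlim)
    exact le_of_tendsto hlim (Filter.Eventually.of_forall hterm)
  have := hCQ wb hbN hbsum
  have : ∑ l, ‖wb l‖ = 0 := by
    simp [this]
  rw [hbnorm] at this
  exact one_ne_zero this
end

section
/- Let K_1, …, K_r ⊆ ℝⁿ be closed convex sets, x̄ ∈ K := ∩_l K_l, and δ > 0 such that for every x ∈ K ∩ B(x̄,δ): if v_l ∈ N_{K_l}(x) and Σ_l v_l = 0 then all v_l = 0. Then there exists a constant M' > 0 such that whenever x ∈ K ∩ B(x̄,δ), v_l ∈ N_{K_l}(x), and v = Σ_{l=1}^r v_l, one has max_l ‖v_l‖ ≤ M'‖v‖. -/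
open RealInnerProductSpace

/-- The normal cone is a cone: closed under nonneg scalar multiplication. -/
lemma normalCone_smul {n : ℕ} {C : Set (EuclideanSpace ℝ (Fin n))}
    {x v : EuclideanSpace ℝ (Fin n)} (hv : v ∈ normalCone C x) {c : ℝ} (hc : 0 ≤ c) :
    c • v ∈ normalCone C x := by
  intro y hy
  rw [real_inner_smul_left]
  exact mul_nonpos_of_nonneg_of_nonpos hc (hv y hy)

/-- Uniform bound on the summands of a sum of normal vectors, under the local
constraint qualification. -/
theorem normal_sum_bound
    {n r : ℕ} (K : Fin r → Set (EuclideanSpace ℝ (Fin n)))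
    (hclosed : ∀ l, IsClosed (K l)) (hconv : ∀ l, Convex ℝ (K l))
    (xbar : EuclideanSpace ℝ (Fin n)) (hxbar : xbar ∈ ⋂ l, K l)
    (δ : ℝ) (hδ : 0 < δ)
    (hCQ : ∀ x ∈ (⋂ l, K l) ∩ Metric.closedBall xbar δ,
      ∀ v : Fin r → EuclideanSpace ℝ (Fin n),
        (∀ l, v l ∈ normalCone (K l) x) → ∑ l, v l = 0 → ∀ l, v l = 0) :
    ∃ M' > (0:ℝ), ∀ x ∈ (⋂ l, K l) ∩ Metric.closedBall xbar δ,
      ∀ v : Fin r → EuclideanSpace ℝ (Fin n),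
        (∀ l, v l ∈ normalCone (K l) x) →
          ∀ l, ‖v l‖ ≤ M' * ‖∑ l, v l‖ := by
  set S : Set (EuclideanSpace ℝ (Fin n) × (Fin r → EuclideanSpace ℝ (Fin n))) :=
    {p | p.1 ∈ (⋂ l, K l) ∩ Metric.closedBall xbar δ ∧
      (∀ l, p.2 l ∈ normalCone (K l) p.1) ∧ ‖p.2‖ = 1} with hSdef
  -- S is closed
  have hSclosed : IsClosed S := by
    have h1 : IsClosed {p : EuclideanSpace ℝ (Fin n) × (Fin r → EuclideanSpace ℝ (Fin n)) |
        p.1 ∈ (⋂ l, K l) ∩ Metric.closedBall xbar δ} :=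
      IsClosed.preimage continuous_fst
        ((isClosed_iInter fun l => hclosed l).inter Metric.isClosed_closedBall)
    have h2 : IsClosed {p : EuclideanSpace ℝ (Fin n) × (Fin r → EuclideanSpace ℝ (Fin n)) |
        ∀ l, p.2 l ∈ normalCone (K l) p.1} := by
      have heq : {p : EuclideanSpace ℝ (Fin n) × (Fin r → EuclideanSpace ℝ (Fin n)) |
            ∀ l, p.2 l ∈ normalCone (K l) p.1}
          = ⋂ l, ⋂ y ∈ K l, {p : EuclideanSpace ℝ (Fin n) × (Fin r → EuclideanSpace ℝ (Fin n)) |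
              ⟪p.2 l, y - p.1⟫ ≤ 0} := by
        ext p
        simp only [Set.mem_setOf_eq, Set.mem_iInter, normalCone]
      rw [heq]
      refine isClosed_iInter fun l => isClosed_biInter fun y _ => ?_
      exact isClosed_le
        (Continuous.inner ((continuous_apply l).comp continuous_snd)
          (continuous_const.sub continuous_fst)) continuous_const
    have h3 : IsClosed {p : EuclideanSpace ℝ (Fin n) × (Fin r → EuclideanSpace ℝ (Fin n)) |
        ‖p.2‖ = 1} :=
      isClosed_eq (continuous_norm.comp continuous_snd) continuous_const
    have hSeq : S = ({p : EuclideanSpace ℝ (Fin n) × (Fin r → EuclideanSpace ℝ (Fin n)) |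
          p.1 ∈ (⋂ l, K l) ∩ Metric.closedBall xbar δ}
        ∩ {p | ∀ l, p.2 l ∈ normalCone (K l) p.1}) ∩ {p | ‖p.2‖ = 1} := by
      ext p
      simp only [hSdef, Set.mem_setOf_eq, Set.mem_inter_iff, and_assoc]
    rw [hSeq]
    exact (h1.inter h2).inter h3
  -- S is compact
  have hScompact : IsCompact S := by
    refine IsCompact.of_isClosed_subset
      ((isCompact_closedBall xbar δ).prod
        (isCompact_closedBall (0 : Fin r → EuclideanSpace ℝ (Fin n)) 1))
      hSclosed ?_
    rintro ⟨x, v⟩ ⟨⟨_, hx2⟩, _, hv1⟩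
    exact ⟨hx2, by simp [Metric.mem_closedBall, dist_zero_right, hv1.le]⟩
  -- positive lower bound on ‖∑ v l‖ over S
  have key : ∃ m > (0:ℝ), ∀ p ∈ S, m ≤ ‖∑ l, p.2 l‖ := by
    rcases Set.eq_empty_or_nonempty S with hSe | hSne
    · exact ⟨1, one_pos, fun p hp => by simp [hSe] at hp⟩
    · have hcont : ContinuousOn
          (fun p : EuclideanSpace ℝ (Fin n) × (Fin r → EuclideanSpace ℝ (Fin n)) =>
            ‖∑ l, p.2 l‖) S :=
        Continuous.continuousOn
          ((continuous_finset_sum _ fun l _ =>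
            (continuous_apply l).comp continuous_snd).norm)
      obtain ⟨p₀, hp₀S, hp₀min⟩ := hScompact.exists_isMinOn hSne hcont
      have hpos : 0 < ‖∑ l, p₀.2 l‖ := by
        rcases (norm_nonneg (∑ l, p₀.2 l)).lt_or_eq with h | h
        · exact h
        · exfalso
          have hsum : ∑ l, p₀.2 l = 0 := by rwa [eq_comm, norm_eq_zero] at h
          have hall := hCQ p₀.1 hp₀S.1 p₀.2 hp₀S.2.1 hsum
          have h2 : p₀.2 = 0 := funext hall
          have h1 := hp₀S.2.2
          rw [h2] at h1
          simp at h1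
      exact ⟨‖∑ l, p₀.2 l‖, hpos, fun p hp => hp₀min hp⟩
  obtain ⟨m, hm, hmS⟩ := key
  refine ⟨m⁻¹, inv_pos.mpr hm, fun x hx v hv l => ?_⟩
  rcases eq_or_ne v 0 with hv0 | hv0
  · subst hv0
    simp [mul_nonneg (inv_nonneg.mpr hm.le) (norm_nonneg _)]
  · have hcpos : (0:ℝ) < ‖v‖ := norm_pos_iff.mpr hv0
    have hmemS : (x, ‖v‖⁻¹ • v) ∈ S := by
      refine ⟨hx, fun l => ?_, ?_⟩
      · exact normalCone_smul (hv l) (inv_nonneg.mpr hcpos.le)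
      · simp [norm_smul, abs_of_pos (inv_pos.mpr hcpos), inv_mul_cancel₀ hcpos.ne']
    have hineq := hmS _ hmemS
    have hsum : ∑ l, (‖v‖⁻¹ • v) l = ‖v‖⁻¹ • ∑ l, v l := by
      simp [Finset.smul_sum]
    simp only [hsum] at hineq
    rw [norm_smul, Real.norm_eq_abs, abs_of_pos (inv_pos.mpr hcpos)] at hineq
    have hcle : ‖v‖ ≤ m⁻¹ * ‖∑ l, v l‖ := by
      rw [inv_mul_eq_div, le_div_iff₀ hm]
      calc ‖v‖ * m ≤ ‖v‖ * (‖v‖⁻¹ * ‖∑ l, v l‖) :=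
            mul_le_mul_of_nonneg_left hineq hcpos.le
        _ = ‖∑ l, v l‖ := by field_simp
    calc ‖v l‖ ≤ ‖v‖ := norm_le_pi_norm v l
      _ ≤ m⁻¹ * ‖∑ l, v l‖ := hcle
end

section
/- Let K_1, …, K_r ⊆ ℝⁿ be closed convex sets with x̄ ∈ ∩_{l=1}^r K_l. Suppose that Σ_{l=1}^r v_l = 0 with v_l ∈ N_{K_l}(x̄) implies v_l = 0 for all l. Then the collection {K_l} satisfies the local metric inequality at x̄: there exist κ̄ > 0 and δ > 0 such that d(x, ∩_l K_l) ≤ κ̄ · max_{1≤l≤r} d(x, K_l) for all x ∈ B(x̄,δ). -/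
open Metric Filter Topology
open RealInnerProductSpace

section auxx
variable {n : ℕ}

lemma aux_exists_proj (K : Set (EuclideanSpace ℝ (Fin n))) (hcl : IsClosed K) (hcv : Convex ℝ K)
    (hne : K.Nonempty) (x : EuclideanSpace ℝ (Fin n)) :
    ∃ p ∈ K, ‖x - p‖ = Metric.infDist x K ∧ ∀ w ∈ K, ⟪x - p, w - p⟫ ≤ 0 := by
  obtain ⟨p, hp, hmin⟩ := exists_norm_eq_iInf_of_complete_convex hne hcl.isComplete hcv x
  refine ⟨p, hp, ?_, (norm_eq_iInf_iff_real_inner_le_zero hcv hp).1 hmin⟩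
  rw [hmin, Metric.infDist_eq_iInf]
  simp_rw [dist_eq_norm]

lemma aux_dsq_upper (K : Set (EuclideanSpace ℝ (Fin n))) {y p : EuclideanSpace ℝ (Fin n)}
    (hp : p ∈ K) (hnorm : ‖y - p‖ = Metric.infDist y K) (w : EuclideanSpace ℝ (Fin n)) :
    Metric.infDist (y + w) K ^ 2 ≤ Metric.infDist y K ^ 2 + 2 * ⟪y - p, w⟫ + ‖w‖ ^ 2 := by
  have h2 : Metric.infDist (y + w) K ≤ ‖(y - p) + w‖ := by
    have h3 := Metric.infDist_le_dist_of_mem (x := y + w) hp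
    rw [dist_eq_norm, show y + w - p = (y - p) + w from by abel] at h3
    exact h3
  have h3 := pow_le_pow_left₀ Metric.infDist_nonneg h2 2
  rw [norm_add_sq_real, hnorm] at h3
  exact h3

lemma aux_dsq_lower (K : Set (EuclideanSpace ℝ (Fin n))) {y p q : EuclideanSpace ℝ (Fin n)}
    {w : EuclideanSpace ℝ (Fin n)}
    (hnormq : ‖(y + w) - q‖ = Metric.infDist (y + w) K)
    (hpinner : ⟪y - p, q - p⟫ ≤ 0) (hnormp : ‖y - p‖ = Metric.infDist y K) :
    Metric.infDist y K ^ 2 + 2 * ⟪y - p, w⟫ ≤ Metric.infDist (y + w) K ^ 2 := by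
  have key : (y + w) - q = (y - p) + (w + (p - q)) := by abel
  have hexp : ‖(y + w) - q‖ ^ 2 = ‖y - p‖ ^ 2 + 2 * ⟪y - p, w + (p - q)⟫ + ‖w + (p - q)‖ ^ 2 := by
    rw [key, norm_add_sq_real]
  have hsplit : ⟪y - p, w + (p - q)⟫ = ⟪y - p, w⟫ + ⟪y - p, p - q⟫ := inner_add_right _ _ _
  have hpq : 0 ≤ ⟪y - p, p - q⟫ := by
    have : ⟪y - p, p - q⟫ = -⟪y - p, q - p⟫ := by
      rw [show p - q = -(q - p) from by abel, inner_neg_right]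
    linarith [this, hpinner]
  have hnn : (0:ℝ) ≤ ‖w + (p - q)‖ ^ 2 := sq_nonneg _
  calc Metric.infDist y K ^ 2 + 2 * ⟪y - p, w⟫
      ≤ ‖y - p‖ ^ 2 + 2 * ⟪y - p, w + (p - q)⟫ + ‖w + (p - q)‖ ^ 2 := by
        rw [hnormp, hsplit]; linarith
    _ = ‖(y + w) - q‖ ^ 2 := hexp.symm
    _ = Metric.infDist (y + w) K ^ 2 := by rw [hnormq]

end auxx

section auxxx
variable {n r : ℕ}

lemma aux_stepA (K : Fin r → Set (EuclideanSpace ℝ (Fin n)))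
    (xbar : EuclideanSpace ℝ (Fin n))
    (hCQ : ∀ v : Fin r → EuclideanSpace ℝ (Fin n),
      (∀ l, v l ∈ normalCone (K l) xbar) → ∑ l, v l = 0 → ∀ l, v l = 0) :
    ∃ c > (0:ℝ), ∀ v : Fin r → EuclideanSpace ℝ (Fin n),
      (∀ l, v l ∈ normalCone (K l) xbar) → c * ∑ l, ‖v l‖ ≤ ‖∑ l, v l‖ := by
  -- it suffices to prove the bound on the "sphere"
  have scale : ∀ c : ℝ, 0 < c →
      (∀ v : Fin r → EuclideanSpace ℝ (Fin n), (∀ l, v l ∈ normalCone (K l) xbar) →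
        (∑ l, ‖v l‖) = 1 → c ≤ ‖∑ l, v l‖) →
      ∀ v : Fin r → EuclideanSpace ℝ (Fin n), (∀ l, v l ∈ normalCone (K l) xbar) →
        c * ∑ l, ‖v l‖ ≤ ‖∑ l, v l‖ := by
    intro c hc h v hv
    rcases eq_or_lt_of_le (Finset.sum_nonneg fun l _ => norm_nonneg (v l)) with hs | hs
    · have h0 : ∀ l ∈ Finset.univ, ‖v l‖ = 0 := by
        intro l hl
        exact le_antisymm (by
          have := Finset.single_le_sum (f := fun l => ‖v l‖)
            (fun i _ => norm_nonneg (v i)) hl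
          linarith [this]) (norm_nonneg _)
      have hv0 : ∑ l, v l = 0 :=
        Finset.sum_eq_zero fun l hl => norm_eq_zero.mp (h0 l hl)
      rw [hv0, ← hs]
      simp
    · set s := ∑ l, ‖v l‖ with hs_def
      have hsne : s ≠ 0 := ne_of_gt hs
      have key := h (fun l => s⁻¹ • v l)
        (fun l y hy => by
          have h1 := hv l y hy
          have : ⟪s⁻¹ • v l, y - xbar⟫ = s⁻¹ * ⟪v l, y - xbar⟫ := real_inner_smul_left _ _ _
          rw [this]
          exact mul_nonpos_of_nonneg_of_nonpos (by positivity) h1)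
        (by
          simp_rw [norm_smul, Real.norm_eq_abs, abs_of_pos (inv_pos.mpr hs), ← Finset.mul_sum]
          field_simp
          exact hs_def.symm)
      rw [← Finset.smul_sum, norm_smul, Real.norm_eq_abs, abs_of_pos (inv_pos.mpr hs)] at key
      calc c * s ≤ (s⁻¹ * ‖∑ l, v l‖) * s := by nlinarith
        _ = ‖∑ l, v l‖ := by field_simp
  set T : Set (Fin r → EuclideanSpace ℝ (Fin n)) :=
    {v | (∀ l, v l ∈ normalCone (K l) xbar) ∧ ∑ l, ‖v l‖ = 1} with hT
  rcases T.eq_empty_or_nonempty with hTe | hTne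
  · refine ⟨1, one_pos, scale 1 one_pos ?_⟩
    intro v hv hsum
    exact absurd (show v ∈ T from ⟨hv, hsum⟩) (by rw [hTe]; simp)
  · have hTclosed : IsClosed T := by
      have h1 : IsClosed {v : Fin r → EuclideanSpace ℝ (Fin n) |
          ∀ l, v l ∈ normalCone (K l) xbar} := by
        have heq : {v : Fin r → EuclideanSpace ℝ (Fin n) | ∀ l, v l ∈ normalCone (K l) xbar}
            = ⋂ l, ⋂ y ∈ K l, {v | ⟪v l, y - xbar⟫ ≤ 0} := by
          ext v; simp [normalCone]
        rw [heq]
        refine isClosed_iInter fun l => isClosed_iInter fun y => isClosed_iInter fun _ => ?_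
        exact isClosed_le (Continuous.inner (continuous_apply l) continuous_const)
          continuous_const
      have h2 : IsClosed {v : Fin r → EuclideanSpace ℝ (Fin n) | ∑ l, ‖v l‖ = 1} :=
        isClosed_eq (continuous_finset_sum _ fun l _ => (continuous_apply l).norm)
          continuous_const
      exact h1.inter h2
    have hTsub : T ⊆ Metric.closedBall 0 1 := by
      intro v hv
      rw [Metric.mem_closedBall, dist_pi_le_iff zero_le_one]
      intro l
      rw [show (0 : Fin r → EuclideanSpace ℝ (Fin n)) l = 0 from rfl, dist_zero_right]
      calc ‖v l‖ ≤ ∑ i, ‖v i‖ :=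
            Finset.single_le_sum (fun i _ => norm_nonneg (v i)) (Finset.mem_univ l)
        _ = 1 := hv.2
    have hTcompact : IsCompact T :=
      (isCompact_closedBall (0 : Fin r → EuclideanSpace ℝ (Fin n)) 1).of_isClosed_subset
        hTclosed hTsub
    have hcont : Continuous fun v : Fin r → EuclideanSpace ℝ (Fin n) => ‖∑ l, v l‖ :=
      (continuous_finset_sum _ fun l _ => continuous_apply l).norm
    obtain ⟨v0, hv0T, hv0min⟩ := hTcompact.exists_isMinOn hTne hcont.continuousOn
    have hc0 : 0 < ‖∑ l, v0 l‖ := by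
      rcases eq_or_lt_of_le (norm_nonneg (∑ l, v0 l)) with h0 | h0
      · exfalso
        have hz := hCQ v0 hv0T.1 (norm_eq_zero.mp h0.symm)
        have : (1:ℝ) = 0 := by
          rw [← hv0T.2]
          exact Finset.sum_eq_zero fun l _ => by rw [hz l, norm_zero]
        norm_num at this
      · exact h0
    refine ⟨‖∑ l, v0 l‖, hc0, scale _ hc0 ?_⟩
    intro v hv hsum
    exact hv0min ⟨hv, hsum⟩

lemma aux_stepB (K : Fin r → Set (EuclideanSpace ℝ (Fin n)))
    (xbar : EuclideanSpace ℝ (Fin n)) (hxbar : ∀ l, xbar ∈ K l)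
    (P : Fin r → EuclideanSpace ℝ (Fin n) → EuclideanSpace ℝ (Fin n))
    (hPdist : ∀ l y, ‖y - P l y‖ = Metric.infDist y (K l))
    (hPinner : ∀ l y, ∀ w ∈ K l, ⟪y - P l y, w - P l y⟫ ≤ 0)
    (c : ℝ) (hc : 0 < c)
    (hA : ∀ v : Fin r → EuclideanSpace ℝ (Fin n),
      (∀ l, v l ∈ normalCone (K l) xbar) → c * ∑ l, ‖v l‖ ≤ ‖∑ l, v l‖) :
    ∃ δ2 > (0:ℝ), ∀ y ∈ Metric.closedBall xbar δ2,
      c / 2 * ∑ l, Metric.infDist y (K l) ≤ ‖∑ l, (y - P l y)‖ := by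
  by_contra hcon
  push_neg at hcon
  choose y hyball hylt using fun k : ℕ => hcon (1 / (k + 1)) (by positivity)
  set s : ℕ → ℝ := fun k => ∑ l, Metric.infDist (y k) (K l) with hs_def
  have hs_nonneg : ∀ k, 0 ≤ s k := fun k =>
    Finset.sum_nonneg fun l _ => Metric.infDist_nonneg
  have hspos : ∀ k, 0 < s k := by
    intro k
    rcases eq_or_lt_of_le (hs_nonneg k) with h | h
    · exfalso
      have hzero : ∀ l, y k - P l (y k) = 0 := by
        intro l
        have h1 : Metric.infDist (y k) (K l) = 0 := by
          have := Finset.sum_eq_zero_iff_of_nonneg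
            (fun l (_ : l ∈ Finset.univ) => Metric.infDist_nonneg
              (x := y k) (s := K l)) |>.mp h.symm
          exact this l (Finset.mem_univ l)
        rw [← hPdist l (y k)] at h1
        exact norm_eq_zero.mp h1
      have hGz : ∑ l, (y k - P l (y k)) = 0 := Finset.sum_eq_zero fun l _ => hzero l
      have hlt := hylt k
      have h' : ∑ l, Metric.infDist (y k) (K l) = 0 := h.symm
      rw [hGz, norm_zero, h', mul_zero] at hlt
      exact lt_irrefl 0 hlt
    · exact h
  have hd_le_s : ∀ k l, Metric.infDist (y k) (K l) ≤ s k := fun k l =>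
    Finset.single_le_sum (fun i (_ : i ∈ Finset.univ) =>
      Metric.infDist_nonneg (x := y k) (s := K i)) (Finset.mem_univ l)
  set v : ℕ → Fin r → EuclideanSpace ℝ (Fin n) :=
    fun k l => (s k)⁻¹ • (y k - P l (y k)) with hv_def
  have hvnorm : ∀ k l, ‖v k l‖ = (s k)⁻¹ * Metric.infDist (y k) (K l) := by
    intro k l
    rw [hv_def]
    simp only [norm_smul, Real.norm_eq_abs, abs_of_pos (inv_pos.mpr (hspos k)), hPdist]
  have hvball : ∀ k, v k ∈ Metric.closedBall (0 : Fin r → EuclideanSpace ℝ (Fin n)) 1 := by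
    intro k
    rw [Metric.mem_closedBall, dist_pi_le_iff zero_le_one]
    intro l
    rw [show (0 : Fin r → EuclideanSpace ℝ (Fin n)) l = 0 from rfl, dist_zero_right, hvnorm]
    rw [inv_mul_le_iff₀ (hspos k), mul_one]
    exact hd_le_s k l
  obtain ⟨v', hv'mem, φ, hφ, hconv'⟩ :=
    (isCompact_closedBall (0 : Fin r → EuclideanSpace ℝ (Fin n)) 1).tendsto_subseq hvball
  have hcomp : ∀ l, Tendsto (fun k => v (φ k) l) atTop (nhds (v' l)) := by
    intro l
    exact ((continuous_apply l).continuousAt.tendsto).comp hconv'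
  -- y (φ k) → xbar
  have hdist_y : ∀ k, dist (y k) xbar ≤ 1 / (k + 1) := fun k =>
    Metric.mem_closedBall.mp (hyball k)
  have haux : Tendsto (fun k : ℕ => 1 / ((k : ℝ) + 1)) atTop (nhds 0) :=
    tendsto_one_div_add_atTop_nhds_zero_nat
  have hsubaux : Tendsto (fun k : ℕ => 1 / ((φ k : ℝ) + 1)) atTop (nhds 0) := by
    apply squeeze_zero (fun k => by positivity) (g := fun k : ℕ => 1 / ((k : ℝ) + 1))
    · intro k
      have h1 : (k : ℝ) ≤ (φ k : ℝ) := Nat.cast_le.mpr hφ.le_apply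
      exact one_div_le_one_div_of_le (by positivity) (by linarith)
    · exact haux
  have hP0 : ∀ l, Tendsto (fun k => P l (y (φ k))) atTop (nhds xbar) := by
    intro l
    rw [tendsto_iff_dist_tendsto_zero]
    apply squeeze_zero (fun k => dist_nonneg) (g := fun k : ℕ => 2 * (1 / ((φ k : ℝ) + 1)))
    · intro k
      have h1 : dist (P l (y (φ k))) (y (φ k)) ≤ dist (y (φ k)) xbar := by
        rw [dist_comm, dist_eq_norm, hPdist]
        exact Metric.infDist_le_dist_of_mem (hxbar l)
      calc dist (P l (y (φ k))) xbar
          ≤ dist (P l (y (φ k))) (y (φ k)) + dist (y (φ k)) xbar := dist_triangle _ _ _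
        _ ≤ 2 * dist (y (φ k)) xbar := by linarith
        _ ≤ 2 * (1 / ((φ k : ℝ) + 1)) := by
            have := hdist_y (φ k)
            push_cast at this ⊢
            linarith
    · simpa using hsubaux.const_mul 2
  have hsum1 : ∑ l, ‖v' l‖ = 1 := by
    have hlim : Tendsto (fun k => ∑ l, ‖v (φ k) l‖) atTop (nhds (∑ l, ‖v' l‖)) :=
      tendsto_finset_sum _ fun l _ => (hcomp l).norm
    have heq : ∀ k, ∑ l, ‖v (φ k) l‖ = 1 := by
      intro k
      simp_rw [hvnorm, ← Finset.mul_sum]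
      exact inv_mul_cancel₀ (ne_of_gt (hspos (φ k)))
    rw [show (fun k => ∑ l, ‖v (φ k) l‖) = fun _ => (1:ℝ) from funext heq] at hlim
    exact tendsto_nhds_unique hlim tendsto_const_nhds
  have hmemN : ∀ l, v' l ∈ normalCone (K l) xbar := by
    intro l z hz
    have hk : ∀ k, ⟪v (φ k) l, z - P l (y (φ k))⟫ ≤ 0 := by
      intro k
      rw [hv_def]
      have := hPinner l (y (φ k)) z hz
      have h2 : ⟪(s (φ k))⁻¹ • (y (φ k) - P l (y (φ k))), z - P l (y (φ k))⟫
          = (s (φ k))⁻¹ * ⟪y (φ k) - P l (y (φ k)), z - P l (y (φ k))⟫ :=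
        real_inner_smul_left _ _ _
      rw [h2]
      exact mul_nonpos_of_nonneg_of_nonpos (le_of_lt (inv_pos.mpr (hspos (φ k)))) this
    have hlim : Tendsto (fun k => ⟪v (φ k) l, z - P l (y (φ k))⟫) atTop
        (nhds ⟪v' l, z - xbar⟫) :=
      (hcomp l).inner (tendsto_const_nhds.sub (hP0 l))
    exact le_of_tendsto hlim (Filter.Eventually.of_forall hk)
  have hnormle : ‖∑ l, v' l‖ ≤ c / 2 := by
    have h1 : ∀ k, ‖∑ l, v (φ k) l‖ ≤ c / 2 := by
      intro k
      have heq : ∑ l, v (φ k) l = (s (φ k))⁻¹ • ∑ l, (y (φ k) - P l (y (φ k))) := by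
        rw [Finset.smul_sum]
      rw [heq, norm_smul, Real.norm_eq_abs, abs_of_pos (inv_pos.mpr (hspos (φ k)))]
      have := (hylt (φ k)).le
      rw [inv_mul_le_iff₀ (hspos (φ k))]
      calc ‖∑ l, (y (φ k) - P l (y (φ k)))‖ ≤ c / 2 * s (φ k) := this
        _ = s (φ k) * (c / 2) := mul_comm _ _
    have hlim : Tendsto (fun k => ‖∑ l, v (φ k) l‖) atTop (nhds ‖∑ l, v' l‖) :=
      (tendsto_finset_sum _ fun l _ => hcomp l).norm
    exact le_of_tendsto hlim (Filter.Eventually.of_forall h1)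
  have := hA v' hmemN
  rw [hsum1, mul_one] at this
  linarith

end auxxx

lemma aux_step_descent {n r : ℕ} (K : Fin r → Set (EuclideanSpace ℝ (Fin n)))
    (hclosed : ∀ l, IsClosed (K l)) (hKne : ∀ l, (K l).Nonempty)
    (xbar : EuclideanSpace ℝ (Fin n)) (c δ2 : ℝ) (hc : 0 < c) (hδ2 : 0 < δ2)
    (F : EuclideanSpace ℝ (Fin n) → ℝ) (f : EuclideanSpace ℝ (Fin n) → ℝ)
    (G : EuclideanSpace ℝ (Fin n) → EuclideanSpace ℝ (Fin n))
    (hFnonneg : ∀ y, 0 ≤ F y) (hfnonneg : ∀ y, 0 ≤ f y) (hfsq : ∀ y, f y ^ 2 = F y)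
    (hFcont : Continuous F)
    (hFsum : ∀ y, F y = ∑ l, Metric.infDist y (K l) ^ 2)
    (hfF : ∀ y, f y = Real.sqrt (F y))
    (hFupper : ∀ y w, F (y + w) ≤ F y + 2 * ⟪G y, w⟫ + r * ‖w‖ ^ 2)
    (hFlower : ∀ y w, F y + 2 * ⟪G y, w⟫ ≤ F (y + w))
    (hGlow : ∀ y ∈ Metric.closedBall xbar δ2, c / 2 * f y ≤ ‖G y‖) :
    ∀ x0 : EuclideanSpace ℝ (Fin n), ∃ y',
      (Metric.closedBall x0 (2 / c * f x0) ⊆ Metric.closedBall xbar δ2 →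
        dist y' x0 ≤ 2 / c * f x0 ∧ f y' ≤ f x0 / 2) := by
  intro x0
  by_cases hball : Metric.closedBall x0 (2 / c * f x0) ⊆ Metric.closedBall xbar δ2
  swap
  · exact ⟨x0, fun h => absurd h hball⟩
  set ρ := 2 / c * f x0 with hρ_def
  have hρ0 : 0 ≤ ρ := mul_nonneg (by positivity) (hfnonneg x0)
  by_cases hmeet : ∃ z ∈ Metric.closedBall x0 ρ, z ∈ ⋂ l, K l
  · obtain ⟨z, hz1, hz2⟩ := hmeet
    refine ⟨z, fun _ => ⟨Metric.mem_closedBall.mp hz1, ?_⟩⟩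
    have hFz : F z = 0 := by
      rw [hFsum]
      exact Finset.sum_eq_zero fun l _ => by
        rw [Metric.infDist_zero_of_mem (Set.mem_iInter.mp hz2 l)]; ring
    have : f z = 0 := by rw [hfF, hFz, Real.sqrt_zero]
    rw [this]
    have := hfnonneg x0
    linarith
  · push_neg at hmeet
    obtain ⟨y', hy'ball, hy'min⟩ := (isCompact_closedBall x0 ρ).exists_isMinOn
      ⟨x0, Metric.mem_closedBall_self hρ0⟩ hFcont.continuousOn
    have hFy'pos : 0 < F y' := by
      rcases eq_or_lt_of_le (hFnonneg y') with h0 | h0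
      · exfalso
        have h0' : ∑ l, Metric.infDist y' (K l) ^ 2 = 0 := by rw [← hFsum]; exact h0.symm
        have hdz : ∀ l, Metric.infDist y' (K l) = 0 := by
          intro l
          have := (Finset.sum_eq_zero_iff_of_nonneg
            (fun l (_ : l ∈ Finset.univ) => sq_nonneg (Metric.infDist y' (K l)))).mp
            h0' l (Finset.mem_univ l)
          exact (pow_eq_zero_iff (by norm_num : (2:ℕ) ≠ 0)).mp this
        have hy'C : y' ∈ ⋂ l, K l := Set.mem_iInter.mpr fun l =>
          ((hclosed l).mem_iff_infDist_zero (hKne l)).mpr (hdz l)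
        exact hmeet y' hy'ball hy'C
      · exact h0
    have hfy'pos : 0 < f y' := by rw [hfF]; exact Real.sqrt_pos.mpr hFy'pos
    have hfoc : ∀ z ∈ Metric.closedBall x0 ρ, 0 ≤ ⟪G y', z - y'⟫ := by
      intro z hz
      by_contra hneg
      push_neg at hneg
      set A := ⟪G y', z - y'⟫ with hA_def
      set B := (r : ℝ) * ‖z - y'‖ ^ 2 with hB_def
      have hB0 : 0 ≤ B := by positivity
      set t := min 1 ((-A) / (B + 1)) with ht_def
      have htpos : 0 < t := lt_min one_pos (div_pos (neg_pos.mpr hneg) (by linarith))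
      have ht1 : t ≤ 1 := min_le_left _ _
      have hzt : y' + t • (z - y') ∈ Metric.closedBall x0 ρ := by
        have heq : y' + t • (z - y') = (1 - t) • y' + t • z := by
          rw [smul_sub]; module
        rw [heq]
        exact convex_closedBall x0 ρ hy'ball hz (by linarith) (le_of_lt htpos) (by ring)
      have hmin := isMinOn_iff.mp hy'min _ hzt
      have hupper := hFupper y' (t • (z - y'))
      have hinner : ⟪G y', t • (z - y')⟫ = t * A := real_inner_smul_right _ _ _
      have hnormsq : ‖t • (z - y')‖ ^ 2 = t ^ 2 * ‖z - y'‖ ^ 2 := by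
        rw [norm_smul, Real.norm_eq_abs, mul_pow, sq_abs]
      rw [hinner, hnormsq] at hupper
      have hmin' : F y' ≤ F (y' + t • (z - y')) := hmin
      have hcomb : 0 ≤ 2 * (t * A) + t ^ 2 * ((r:ℝ) * ‖z - y'‖ ^ 2) := by nlinarith
      have hdiv : 0 ≤ 2 * A + t * B := by
        rw [hB_def]
        nlinarith
      have htB : t * B ≤ -A := by
        have h1 : t ≤ (-A) / (B + 1) := min_le_right _ _
        have h2 : t * B ≤ ((-A) / (B + 1)) * B := mul_le_mul_of_nonneg_right h1 hB0
        have h3 : ((-A) / (B + 1)) * B ≤ -A := by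
          rw [div_mul_eq_mul_div, div_le_iff₀ (by linarith : (0:ℝ) < B + 1)]
          nlinarith [neg_pos.mpr hneg]
        linarith
      linarith
    have hy'in2 : y' ∈ Metric.closedBall xbar δ2 := hball hy'ball
    have hGlb : c / 2 * f y' ≤ ‖G y'‖ := hGlow y' hy'in2
    have hGpos : 0 < ‖G y'‖ := lt_of_lt_of_le (mul_pos (by positivity) hfy'pos) hGlb
    have hFy'le : F y' ≤ F x0 := isMinOn_iff.mp hy'min _ (Metric.mem_closedBall_self hρ0)
    have hfy'le : f y' ≤ f x0 := by rw [hfF, hfF]; exact Real.sqrt_le_sqrt hFy'le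
    have hfx0pos : 0 < f x0 := lt_of_lt_of_le hfy'pos hfy'le
    have hρpos : 0 < ρ := by rw [hρ_def]; exact mul_pos (by positivity) hfx0pos
    have hkey : ρ * ‖G y'‖ ≤ ⟪G y', x0 - y'⟫ := by
      have hzmem : x0 - (ρ * ‖G y'‖⁻¹) • G y' ∈ Metric.closedBall x0 ρ := by
        rw [Metric.mem_closedBall, dist_eq_norm,
          show x0 - (ρ * ‖G y'‖⁻¹) • G y' - x0 = -((ρ * ‖G y'‖⁻¹) • G y') from by abel,
          norm_neg, norm_smul, Real.norm_eq_abs,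
          abs_of_nonneg (mul_nonneg hρ0 (le_of_lt (inv_pos.mpr hGpos))),
          mul_assoc, inv_mul_cancel₀ (ne_of_gt hGpos), mul_one]
      have h0 := hfoc _ hzmem
      have hexp : ⟪G y', x0 - (ρ * ‖G y'‖⁻¹) • G y' - y'⟫
          = ⟪G y', x0 - y'⟫ - ρ * ‖G y'‖⁻¹ * ⟪G y', G y'⟫ := by
        rw [show x0 - (ρ * ‖G y'‖⁻¹) • G y' - y' = (x0 - y') - (ρ * ‖G y'‖⁻¹) • G y' from by
          abel, inner_sub_right, real_inner_smul_right]
      rw [hexp, real_inner_self_eq_norm_sq] at h0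
      have hsimp : ρ * ‖G y'‖⁻¹ * ‖G y'‖ ^ 2 = ρ * ‖G y'‖ := by
        field_simp
      rw [hsimp] at h0
      linarith
    have hlow := hFlower y' (x0 - y')
    rw [show y' + (x0 - y') = x0 from by abel] at hlow
    have hmain : F y' + 2 * (f x0 * f y') ≤ F x0 := by
      have h1 : ρ * (c / 2 * f y') ≤ ρ * ‖G y'‖ :=
        mul_le_mul_of_nonneg_left hGlb (le_of_lt hρpos)
      have h2 : ρ * (c / 2 * f y') = f x0 * f y' := by
        rw [hρ_def]; field_simp
      nlinarith
    refine ⟨y', fun _ => ⟨Metric.mem_closedBall.mp hy'ball, ?_⟩⟩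
    by_contra hgt
    push_neg at hgt
    have e1 : f x0 ^ 2 = F x0 := hfsq x0
    have e2 : f y' ^ 2 = F y' := hfsq y'
    nlinarith

/-- The constraint qualification implies the local metric inequality (linear
regularity) at `x̄`. -/
theorem CQ_implies_local_metric_inequality
    {n r : ℕ} (K : Fin r → Set (EuclideanSpace ℝ (Fin n)))
    (hclosed : ∀ l, IsClosed (K l)) (hconv : ∀ l, Convex ℝ (K l))
    (xbar : EuclideanSpace ℝ (Fin n)) (hxbar : xbar ∈ ⋂ l, K l)
    (hCQ : ∀ v : Fin r → EuclideanSpace ℝ (Fin n),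
      (∀ l, v l ∈ normalCone (K l) xbar) → ∑ l, v l = 0 → ∀ l, v l = 0) :
    ∃ κ > (0:ℝ), ∃ δ > (0:ℝ), ∀ x ∈ Metric.closedBall xbar δ,
      Metric.infDist x (⋂ l, K l) ≤ κ * ⨆ l, Metric.infDist x (K l) := by
  classical
  rcases Nat.eq_zero_or_pos r with hr0 | hrpos
  · subst hr0
    refine ⟨1, one_pos, 1, one_pos, fun x _ => ?_⟩
    rw [Set.iInter_of_empty, Metric.infDist_zero_of_mem (Set.mem_univ x)]
    have : (⨆ l : Fin 0, Metric.infDist x (K l)) = 0 := by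
      simp [Real.iSup_of_isEmpty]
    rw [this]
    norm_num
  haveI : Nonempty (Fin r) := Fin.pos_iff_nonempty.mp hrpos
  have hxK : ∀ l, xbar ∈ K l := fun l => Set.mem_iInter.mp hxbar l
  have hKne : ∀ l, (K l).Nonempty := fun l => ⟨xbar, hxK l⟩
  choose P hPmem hPdist hPinner using
    fun l (y : EuclideanSpace ℝ (Fin n)) => aux_exists_proj (K l) (hclosed l) (hconv l) (hKne l) y
  obtain ⟨c, hc, hA⟩ := aux_stepA K xbar hCQ
  obtain ⟨δ2, hδ2, hB⟩ := aux_stepB K xbar hxK P hPdist hPinner c hc hA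
  set F : EuclideanSpace ℝ (Fin n) → ℝ :=
    fun y => ∑ l, Metric.infDist y (K l) ^ 2 with hF_def
  set f : EuclideanSpace ℝ (Fin n) → ℝ := fun y => Real.sqrt (F y) with hf_def
  set G : EuclideanSpace ℝ (Fin n) → EuclideanSpace ℝ (Fin n) :=
    fun y => ∑ l, (y - P l y) with hG_def
  have hFnonneg : ∀ y, 0 ≤ F y := fun y => Finset.sum_nonneg fun l _ => sq_nonneg _
  have hfnonneg : ∀ y, 0 ≤ f y := fun y => Real.sqrt_nonneg _
  have hfsq : ∀ y, f y ^ 2 = F y := fun y => Real.sq_sqrt (hFnonneg y)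
  have hFcont : Continuous F :=
    continuous_finset_sum _ fun l _ => (Metric.continuous_infDist_pt (K l)).pow 2
  have hfcont : Continuous f := Real.continuous_sqrt.comp hFcont
  have hGinner : ∀ y w, ⟪G y, w⟫ = ∑ l, ⟪y - P l y, w⟫ := by
    intro y w
    exact sum_inner (𝕜 := ℝ) Finset.univ (fun l => y - P l y) w
  have hFsum : ∀ y, F y = ∑ l, Metric.infDist y (K l) ^ 2 := fun _ => rfl
  have hfF : ∀ y, f y = Real.sqrt (F y) := fun _ => rfl
  have hGsum : ∀ y, G y = ∑ l, (y - P l y) := fun _ => rfl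
  clear_value F f G
  have hFupper : ∀ y w, F (y + w) ≤ F y + 2 * ⟪G y, w⟫ + r * ‖w‖ ^ 2 := by
    intro y w
    have h1 : ∀ l : Fin r,
        Metric.infDist (y + w) (K l) ^ 2
          ≤ Metric.infDist y (K l) ^ 2 + 2 * ⟪y - P l y, w⟫ + ‖w‖ ^ 2 :=
      fun l => aux_dsq_upper (K l) (hPmem l y) (hPdist l y) w
    calc F (y + w) = ∑ l, Metric.infDist (y + w) (K l) ^ 2 := hFsum _
      _ ≤ ∑ l, (Metric.infDist y (K l) ^ 2 + 2 * ⟪y - P l y, w⟫ + ‖w‖ ^ 2) :=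
          Finset.sum_le_sum fun l _ => h1 l
      _ = F y + 2 * ⟪G y, w⟫ + r * ‖w‖ ^ 2 := by
          rw [hFsum, hGinner]
          simp only [Finset.sum_add_distrib, Finset.sum_const, Finset.card_univ,
            Fintype.card_fin, nsmul_eq_mul, ← Finset.mul_sum]
  have hFlower : ∀ y w, F y + 2 * ⟪G y, w⟫ ≤ F (y + w) := by
    intro y w
    have h1 : ∀ l : Fin r,
        Metric.infDist y (K l) ^ 2 + 2 * ⟪y - P l y, w⟫
          ≤ Metric.infDist (y + w) (K l) ^ 2 :=
      fun l => aux_dsq_lower (K l) (hPdist l (y + w))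
        (hPinner l y (P l (y + w)) (hPmem l (y + w))) (hPdist l y)
    calc F y + 2 * ⟪G y, w⟫ = ∑ l, (Metric.infDist y (K l) ^ 2 + 2 * ⟪y - P l y, w⟫) := by
          rw [hFsum, hGinner]
          simp only [Finset.sum_add_distrib, ← Finset.mul_sum]
      _ ≤ ∑ l, Metric.infDist (y + w) (K l) ^ 2 := Finset.sum_le_sum fun l _ => h1 l
      _ = F (y + w) := (hFsum _).symm
  have hf_le_sum : ∀ y, f y ≤ ∑ l, Metric.infDist y (K l) := by
    intro y
    have hsum_nonneg : 0 ≤ ∑ l, Metric.infDist y (K l) :=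
      Finset.sum_nonneg fun l _ => Metric.infDist_nonneg
    rw [hfF, show ∑ l, Metric.infDist y (K l)
        = Real.sqrt ((∑ l, Metric.infDist y (K l)) ^ 2) from (Real.sqrt_sq hsum_nonneg).symm]
    apply Real.sqrt_le_sqrt
    calc F y = ∑ l, Metric.infDist y (K l) ^ 2 := hFsum y
      _ ≤ ∑ l, (Metric.infDist y (K l) * ∑ i, Metric.infDist y (K i)) := by
          refine Finset.sum_le_sum fun l _ => ?_
          have h1 : Metric.infDist y (K l) ≤ ∑ i, Metric.infDist y (K i) :=
            Finset.single_le_sum (fun i _ => Metric.infDist_nonneg) (Finset.mem_univ l)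
          have h2 : (0:ℝ) ≤ Metric.infDist y (K l) := Metric.infDist_nonneg
          nlinarith
      _ = (∑ l, Metric.infDist y (K l)) ^ 2 := by rw [← Finset.sum_mul]; ring
  have hGlow : ∀ y ∈ Metric.closedBall xbar δ2, c / 2 * f y ≤ ‖G y‖ := by
    intro y hy
    calc c / 2 * f y ≤ c / 2 * ∑ l, Metric.infDist y (K l) :=
          mul_le_mul_of_nonneg_left (hf_le_sum y) (by positivity)
      _ ≤ ‖G y‖ := by rw [hGsum]; exact hB y hy
  have hstep := aux_step_descent K hclosed hKne xbar c δ2 hc hδ2 F f G hFnonneg hfnonneg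
    hfsq hFcont hFsum hfF hFupper hFlower hGlow
  choose step hstepP using hstep
  set β := 2 / c with hβ_def
  have hβpos : 0 < β := by rw [hβ_def]; positivity
  set δ1 := δ2 / (1 + 3 * (β * Real.sqrt r)) with hδ1_def
  have hsqrtr_pos : 0 < Real.sqrt r := Real.sqrt_pos.mpr (by exact_mod_cast hrpos)
  have hδ1pos : 0 < δ1 := div_pos hδ2 (by positivity)
  refine ⟨2 * β * Real.sqrt r, by positivity, δ1, hδ1pos, ?_⟩
  intro x hx
  have hfx_le : f x ≤ Real.sqrt r * δ1 := by
    have hFx : F x ≤ r * δ1 ^ 2 := by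
      calc F x = ∑ l, Metric.infDist x (K l) ^ 2 := hFsum x
        _ ≤ ∑ _l : Fin r, δ1 ^ 2 := by
            refine Finset.sum_le_sum fun l _ => ?_
            have h1 : Metric.infDist x (K l) ≤ dist x xbar :=
              Metric.infDist_le_dist_of_mem (hxK l)
            have h2 : dist x xbar ≤ δ1 := Metric.mem_closedBall.mp hx
            exact pow_le_pow_left₀ Metric.infDist_nonneg (h1.trans h2) 2
        _ = r * δ1 ^ 2 := by
            rw [Finset.sum_const, Finset.card_univ, Fintype.card_fin, nsmul_eq_mul]
    calc f x = Real.sqrt (F x) := hfF x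
      _ ≤ Real.sqrt (r * δ1 ^ 2) := Real.sqrt_le_sqrt hFx
      _ = Real.sqrt r * δ1 := by
          rw [Real.sqrt_mul (Nat.cast_nonneg r), Real.sqrt_sq (le_of_lt hδ1pos)]
  set seq : ℕ → EuclideanSpace ℝ (Fin n) := fun k => step^[k] x with hseq_def
  have hseq0 : seq 0 = x := rfl
  have hseq_succ : ∀ k, seq (k + 1) = step (seq k) := fun k =>
    Function.iterate_succ_apply' step k x
  have hballk : ∀ z : EuclideanSpace ℝ (Fin n), f z ≤ f x → dist z x ≤ 2 * β * f x →
      Metric.closedBall z (β * f z) ⊆ Metric.closedBall xbar δ2 := by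
    intro z hfz hdz w hw
    rw [Metric.mem_closedBall]
    have h1 : dist w z ≤ β * f z := Metric.mem_closedBall.mp hw
    have h2 : dist w xbar ≤ dist w z + dist z x + dist x xbar := dist_triangle4 w z x xbar
    have h3 : dist x xbar ≤ δ1 := Metric.mem_closedBall.mp hx
    have h4 : β * f z ≤ β * f x := mul_le_mul_of_nonneg_left hfz (le_of_lt hβpos)
    have h5 : 3 * β * f x ≤ 3 * β * (Real.sqrt r * δ1) := by
      have := mul_le_mul_of_nonneg_left hfx_le (le_of_lt (by positivity : (0:ℝ) < 3 * β))
      linarith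
    have h6 : δ1 * (1 + 3 * (β * Real.sqrt r)) = δ2 := by
      rw [hδ1_def]
      field_simp
    have h7 : 3 * β * (Real.sqrt r * δ1) = δ1 * (3 * (β * Real.sqrt r)) := by ring
    linarith
  have inv : ∀ k, f (seq k) ≤ (1/2 : ℝ) ^ k * f x ∧
      dist (seq k) x ≤ (2 - 2 * (1/2 : ℝ) ^ k) * (β * f x) := by
    intro k
    induction k with
    | zero =>
      constructor
      · simp [hseq0]
      · simp [hseq0]
    | succ k ih =>
      obtain ⟨ih1, ih2⟩ := ih
      have hpowle : (1/2 : ℝ) ^ k ≤ 1 := pow_le_one₀ (by norm_num) (by norm_num)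
      have hpow0 : (0:ℝ) < (1/2 : ℝ) ^ k := by positivity
      have hfle : f (seq k) ≤ f x := by
        have := mul_le_mul_of_nonneg_right hpowle (hfnonneg x)
        rw [one_mul] at this
        linarith
      have hbfx : 0 ≤ β * f x := mul_nonneg (le_of_lt hβpos) (hfnonneg x)
      have hdist : dist (seq k) x ≤ 2 * β * f x := by
        have hprod : 0 ≤ (1/2 : ℝ) ^ k * (β * f x) := mul_nonneg (le_of_lt hpow0) hbfx
        nlinarith [ih2]
      obtain ⟨h1, h2⟩ := hstepP (seq k) (hballk (seq k) hfle hdist)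
      rw [hseq_succ k]
      refine ⟨?_, ?_⟩
      · calc f (step (seq k)) ≤ f (seq k) / 2 := h2
          _ ≤ ((1/2) ^ k * f x) / 2 := by linarith
          _ = (1/2) ^ (k + 1) * f x := by ring
      · calc dist (step (seq k)) x ≤ dist (step (seq k)) (seq k) + dist (seq k) x :=
            dist_triangle _ _ _
          _ ≤ β * f (seq k) + (2 - 2 * (1/2) ^ k) * (β * f x) := add_le_add h1 ih2
          _ ≤ β * ((1/2) ^ k * f x) + (2 - 2 * (1/2) ^ k) * (β * f x) := by
              have := mul_le_mul_of_nonneg_left ih1 (le_of_lt hβpos)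
              linarith
          _ = (2 - 2 * (1/2) ^ (k + 1)) * (β * f x) := by ring
  have hstep' : ∀ k, dist (seq (k + 1)) (seq k) ≤ β * f (seq k) := by
    intro k
    obtain ⟨ih1, ih2⟩ := inv k
    have hpowle : (1/2 : ℝ) ^ k ≤ 1 := pow_le_one₀ (by norm_num) (by norm_num)
    have hpow0 : (0:ℝ) < (1/2 : ℝ) ^ k := by positivity
    have hfle : f (seq k) ≤ f x := by
      have := mul_le_mul_of_nonneg_right hpowle (hfnonneg x)
      rw [one_mul] at this
      linarith
    have hbfx : 0 ≤ β * f x := mul_nonneg (le_of_lt hβpos) (hfnonneg x)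
    have hdist : dist (seq k) x ≤ 2 * β * f x := by
      have hprod : 0 ≤ (1/2 : ℝ) ^ k * (β * f x) := mul_nonneg (le_of_lt hpow0) hbfx
      nlinarith [ih2]
    obtain ⟨h1, _⟩ := hstepP (seq k) (hballk (seq k) hfle hdist)
    rw [hseq_succ k]
    exact h1
  have hgeom : ∀ k, dist (seq k) (seq (k + 1)) ≤ (β * f x) * (1/2 : ℝ) ^ k := by
    intro k
    rw [dist_comm]
    calc dist (seq (k + 1)) (seq k) ≤ β * f (seq k) := hstep' k
      _ ≤ β * ((1/2) ^ k * f x) :=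
          mul_le_mul_of_nonneg_left (inv k).1 (le_of_lt hβpos)
      _ = (β * f x) * (1/2) ^ k := by ring
  have hcauchy : CauchySeq seq :=
    cauchySeq_of_le_geometric (1/2) (β * f x) (by norm_num) hgeom
  obtain ⟨z, hz⟩ := cauchySeq_tendsto_of_complete hcauchy
  have hzC : z ∈ ⋂ l, K l := by
    have hfseq : Tendsto (fun k => f (seq k)) atTop (nhds (f z)) :=
      (hfcont.continuousAt).tendsto.comp hz
    have hlim0 : Tendsto (fun k => (1/2 : ℝ) ^ k * f x) atTop (nhds 0) := by
      have h := tendsto_pow_atTop_nhds_zero_of_lt_one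
        (by norm_num : (0:ℝ) ≤ 1/2) (by norm_num : (1/2 : ℝ) < 1)
      simpa using h.mul_const (f x)
    have hfz_le : f z ≤ 0 :=
      le_of_tendsto_of_tendsto' hfseq hlim0 fun k => (inv k).1
    have hfz : f z = 0 := le_antisymm hfz_le (hfnonneg z)
    have hFz : F z = 0 := by
      have h1 := hfsq z
      rw [hfz] at h1
      simpa using h1.symm
    rw [Set.mem_iInter]
    intro l
    rw [hFsum] at hFz
    have hsumz := (Finset.sum_eq_zero_iff_of_nonneg
      (fun l (_ : l ∈ Finset.univ) => sq_nonneg (Metric.infDist z (K l)))).mp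
      hFz l (Finset.mem_univ l)
    have hzero : Metric.infDist z (K l) = 0 := (pow_eq_zero_iff (by norm_num : (2:ℕ) ≠ 0)).mp hsumz
    exact ((hclosed l).mem_iff_infDist_zero (hKne l)).mpr hzero
  have hdxz : dist x z ≤ 2 * β * f x := by
    have hlim : Tendsto (fun k => dist (seq k) x) atTop (nhds (dist z x)) :=
      hz.dist tendsto_const_nhds
    have hbfx : 0 ≤ β * f x := mul_nonneg (le_of_lt hβpos) (hfnonneg x)
    have hle : dist z x ≤ 2 * β * f x := le_of_tendsto hlim <| Eventually.of_forall fun k => by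
      have hpow0 : (0:ℝ) < (1/2 : ℝ) ^ k := by positivity
      have hprod : 0 ≤ (1/2 : ℝ) ^ k * (β * f x) := mul_nonneg (le_of_lt hpow0) hbfx
      exact (inv k).2.trans (by nlinarith)
    rw [dist_comm]
    exact hle
  set S := ⨆ l, Metric.infDist x (K l) with hS_def
  have hd_le_S : ∀ l, Metric.infDist x (K l) ≤ S := fun l =>
    le_ciSup (f := fun l => Metric.infDist x (K l))
      (Set.Finite.bddAbove (Set.finite_range _)) l
  have hS0 : 0 ≤ S :=
    le_trans Metric.infDist_nonneg (hd_le_S (Classical.arbitrary _))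
  have hfxS : f x ≤ Real.sqrt r * S := by
    have hFxS : F x ≤ r * S ^ 2 := by
      calc F x = ∑ l, Metric.infDist x (K l) ^ 2 := hFsum x
        _ ≤ ∑ _l : Fin r, S ^ 2 := Finset.sum_le_sum fun l _ =>
            pow_le_pow_left₀ Metric.infDist_nonneg (hd_le_S l) 2
        _ = r * S ^ 2 := by
            rw [Finset.sum_const, Finset.card_univ, Fintype.card_fin, nsmul_eq_mul]
    calc f x = Real.sqrt (F x) := hfF x
      _ ≤ Real.sqrt (r * S ^ 2) := Real.sqrt_le_sqrt hFxS
      _ = Real.sqrt r * S := by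
          rw [Real.sqrt_mul (Nat.cast_nonneg r), Real.sqrt_sq hS0]
  calc Metric.infDist x (⋂ l, K l) ≤ dist x z := Metric.infDist_le_dist_of_mem hzC
    _ ≤ 2 * β * f x := hdxz
    _ ≤ 2 * β * (Real.sqrt r * S) :=
        mul_le_mul_of_nonneg_left hfxS (by positivity)
    _ = 2 * β * Real.sqrt r * S := by ring
end
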